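/- arXiv:1308.0445 — 3 statements merged into one kernel-verified Lean document; each statement's English description precedes it below -/
import Mathlib

section
/- (Frostman-type lemma for weighted pressure.) Let K be a nonempty compact subset of X, f ∈ C(X), s ∈ ℝ, N ∈ ℕ, ε > 0, and suppose c := W(K,f,s,N,ε) > 0. Then there exists a Borel probability measure μ on X with μ(K) = 1 such that μ(B_n(x,ε)) ≤ (1/c) exp(-n s + sup_{y ∈ B_n(x,ε)} f_n(y)) for every x ∈ X and every n ≥ N. -/
open Set Filter
open scoped ENNReal

section Defs
variable {X : Type*} [MetricSpace X]

/-- The Bowen ball of order `n` and radius `ε` centered at `x`. -/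
def bowenBall (T : X → X) (n : ℕ) (ε : ℝ) (x : X) : Set X :=
  {y | ∀ i < n, dist (T^[i] x) (T^[i] y) < ε}

/-- Birkhoff sum `f_n(x) = ∑_{j<n} f(T^j x)`. -/
def birkhoff (T : X → X) (f : X → ℝ) (n : ℕ) (x : X) : ℝ :=
  ∑ j ∈ Finset.range n, f (T^[j] x)

/-- Weight `exp(-s n + sup_{B_n(x,ε)} f_n)` of a Bowen ball, as `ℝ≥0∞`. -/
noncomputable def ballWeight (T : X → X) (f : X → ℝ) (s ε : ℝ) (p : X × ℕ) : ℝ≥0∞ :=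
  ENNReal.ofReal (Real.exp (-(s * p.2) + sSup (birkhoff T f p.2 '' bowenBall T p.2 ε p.1)))

/-- `D` is a countable cover of `Z` by Bowen balls of radius `ε` and orders `≥ N`. -/
def IsBowenCover (T : X → X) (ε : ℝ) (N : ℕ) (Z : Set X) (D : Set (X × ℕ)) : Prop :=
  D.Countable ∧ (∀ p ∈ D, N ≤ p.2) ∧ Z ⊆ ⋃ p ∈ D, bowenBall T p.2 ε p.1

/-- `M(Z,f,s,N,ε)`. -/
noncomputable def bowenM (T : X → X) (f : X → ℝ) (Z : Set X) (s : ℝ) (N : ℕ) (ε : ℝ) : ℝ≥0∞ :=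
  ⨅ (D : Set (X × ℕ)) (_ : IsBowenCover T ε N Z D), ∑' p : D, ballWeight T f s ε p

/-- `m(Z,f,s,ε) = lim_{N→∞} M(Z,f,s,N,ε)` (an increasing limit). -/
noncomputable def bowenm (T : X → X) (f : X → ℝ) (Z : Set X) (s ε : ℝ) : ℝ≥0∞ :=
  ⨆ N : ℕ, bowenM T f Z s N ε

/-- `P_B(T,f,Z,ε)`, the critical exponent. -/
noncomputable def bowenPressEps (T : X → X) (f : X → ℝ) (Z : Set X) (ε : ℝ) : ℝ :=
  sInf {s : ℝ | bowenm T f Z s ε = 0}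

/-- Bowen topological pressure `P_B(T,f,Z) = lim_{ε→0} P_B(T,f,Z,ε)` (an increasing limit). -/
noncomputable def bowenPressure (T : X → X) (f : X → ℝ) (Z : Set X) : ℝ :=
  ⨆ ε ∈ Ioi (0:ℝ), bowenPressEps T f Z ε

/-- `E` is an `(n,ε)`-separated subset of `Z`. -/
def IsSeparated (T : X → X) (n : ℕ) (ε : ℝ) (Z : Set X) (E : Finset X) : Prop :=
  ↑E ⊆ Z ∧ ∀ x ∈ E, ∀ y ∈ E, x ≠ y → ∃ i < n, ε < dist (T^[i] x) (T^[i] y)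

/-- `P_n(T,f,Z,ε)`. -/
noncomputable def ucPn (T : X → X) (f : X → ℝ) (Z : Set X) (n : ℕ) (ε : ℝ) : ℝ :=
  sSup {r | ∃ E : Finset X, IsSeparated T n ε Z E ∧ r = ∑ x ∈ E, Real.exp (birkhoff T f n x)}

/-- `P(T,f,Z,ε)`. -/
noncomputable def ucPressEps (T : X → X) (f : X → ℝ) (Z : Set X) (ε : ℝ) : ℝ :=
  Filter.limsup (fun n : ℕ => Real.log (ucPn T f Z n ε) / n) Filter.atTop

/-- Upper capacity topological pressure `P(T,f,Z)`. -/
noncomputable def ucPressure (T : X → X) (f : X → ℝ) (Z : Set X) : ℝ :=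
  ⨆ ε ∈ Ioi (0:ℝ), ucPressEps T f Z ε

/-- The weighted quantity `W(K,f,s,N,ε)`: the infimum of `∑ c_i exp(-s n_i + sup_{B_i} f_{n_i})`
over countable families `{(x_i, n_i, c_i)}` with `n_i ≥ N`, `c_i > 0` and
`∑ c_i χ_{B_{n_i}(x_i,ε)} ≥ χ_K`. -/
noncomputable def bowenW (T : X → X) (f : X → ℝ) (K : Set X) (s : ℝ) (N : ℕ) (ε : ℝ) : ℝ≥0∞ :=
  ⨅ (D : Set (X × ℕ × ℝ)) (_ : D.Countable ∧ (∀ p ∈ D, N ≤ p.2.1 ∧ 0 < p.2.2) ∧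
      ∀ z ∈ K, 1 ≤ ∑' p : D,
        (bowenBall T p.1.2.1 ε p.1.1).indicator (fun _ => ENNReal.ofReal p.1.2.2) z),
    ∑' p : D, ENNReal.ofReal p.1.2.2 * ballWeight T f s ε (p.1.1, p.1.2.1)

noncomputable def bowenw (T : X → X) (f : X → ℝ) (K : Set X) (s ε : ℝ) : ℝ≥0∞ :=
  ⨆ N : ℕ, bowenW T f K s N ε

noncomputable def weightedPressEps (T : X → X) (f : X → ℝ) (K : Set X) (ε : ℝ) : ℝ :=
  sInf {s : ℝ | bowenw T f K s ε = 0}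

/-- Weighted topological pressure `P_W(T,f,K)`. -/
noncomputable def weightedPressure (T : X → X) (f : X → ℝ) (K : Set X) : ℝ :=
  ⨆ ε ∈ Ioi (0:ℝ), weightedPressEps T f K ε

/-- The variant `𝓜(Z,f,s,N,ε)` of `bowenM` using the value of `f_{n_i}` at the center. -/
noncomputable def bowenMc (T : X → X) (f : X → ℝ) (Z : Set X) (s : ℝ) (N : ℕ) (ε : ℝ) : ℝ≥0∞ :=
  ⨅ (D : Set (X × ℕ)) (_ : IsBowenCover T ε N Z D),
    ∑' p : D, ENNReal.ofReal (Real.exp (-(s * (p : X × ℕ).2) + birkhoff T f (p : X × ℕ).2 (p : X × ℕ).1))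

/-- The local measure-theoretic pressure
`P_μ(T,f,x) = lim_{ε→0} liminf_n (1/n) log (e^{f_n(x)} / μ(B_n(x,ε)))`. -/
noncomputable def measPressAt [MeasurableSpace X] (T : X → X) (f : X → ℝ) (μ : MeasureTheory.Measure X) (x : X) : ℝ :=
  ⨆ ε ∈ Ioi (0:ℝ),
    Filter.liminf (fun n : ℕ =>
      (birkhoff T f n x - Real.log (μ (bowenBall T n ε x)).toReal) / n) Filter.atTop

/-- Measure-theoretic pressure `P_μ(T,f) = ∫ P_μ(T,f,x) dμ(x)`. -/
noncomputable def measPressure [MeasurableSpace X] (T : X → X) (f : X → ℝ) (μ : MeasureTheory.Measure X) : ℝ :=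
  ∫ x, measPressAt T f μ x ∂μ

end Defs

section Symbolic
variable {X : Type*} [MetricSpace X]

/-- The cylinder `X(U) = U_1 ∩ T⁻¹U_2 ∩ … ∩ T^{-(n-1)}U_n` of a string `U`. -/
def cylinder (T : X → X) (U : Σ n : ℕ, Fin n → Set X) : Set X :=
  ⋂ j : Fin U.1, T^[j.1] ⁻¹' U.2 j

/-- The weight `exp(-s m(U) + sup_{X(U)} f_{m(U)})` of a string, with the convention that
the weight is `0` when `X(U) = ∅` (i.e. the sup is `-∞`). -/
noncomputable def cylWeight (T : X → X) (f : X → ℝ) (s : ℝ) (U : Σ n : ℕ, Fin n → Set X) : ℝ≥0∞ :=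
  haveI := Classical.propDecidable (cylinder T U = ∅)
  if cylinder T U = ∅ then 0
  else ENNReal.ofReal (Real.exp (-(s * U.1) + sSup (birkhoff T f U.1 '' cylinder T U)))

/-- `M_N^s(𝒰,f,Z)`: infimum over families `Λ` of strings of length `≥ N` in the alphabet `𝒰`
whose cylinders cover `Z`. -/
noncomputable def MUN (T : X → X) (f : X → ℝ) (𝒰 : Finset (Set X)) (s : ℝ) (N : ℕ)
    (Z : Set X) : ℝ≥0∞ :=
  ⨅ (Λ : Set (Σ n : ℕ, Fin n → Set X))
    (_ : Λ.Countable ∧ (∀ V ∈ Λ, N ≤ V.1 ∧ ∀ j, V.2 j ∈ 𝒰) ∧ Z ⊆ ⋃ V ∈ Λ, cylinder T V),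
    ∑' V : Λ, cylWeight T f s V

/-- A finite partition of `X` into clopen sets. -/
def IsClopenPartition (𝒰 : Finset (Set X)) : Prop :=
  (∀ A ∈ 𝒰, IsClopen A) ∧ (⋃ A ∈ 𝒰, A) = Set.univ ∧ (𝒰 : Set (Set X)).PairwiseDisjoint id

end Symbolic

section Entropy
variable {X : Type*} [MetricSpace X] [MeasurableSpace X]

/-- Entropy of a finite collection of sets w.r.t. a measure. -/
noncomputable def partEntropy (μ : MeasureTheory.Measure X) (P : Finset (Set X)) : ℝ :=
  ∑ A ∈ P, -((μ A).toReal * Real.log (μ A).toReal)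

/-- `P` is a finite measurable partition of `X` (mod `μ`-null sets). -/
def IsMeasPartition (μ : MeasureTheory.Measure X) (P : Finset (Set X)) : Prop :=
  (∀ A ∈ P, MeasurableSet A) ∧ μ (⋃ A ∈ P, A)ᶜ = 0 ∧ (P : Set (Set X)).PairwiseDisjoint id

/-- The dynamical refinement `⋁_{i=0}^{n-1} T^{-i} P`. -/
noncomputable def dynRefine (T : X → X) (P : Finset (Set X)) (n : ℕ) : Finset (Set X) := by
  classical
  exact (Finset.univ : Finset (Fin n → {A // A ∈ P})).image
    fun g => ⋂ i : Fin n, T^[i.1] ⁻¹' (g i : Set X)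

/-- Kolmogorov–Sinai measure-theoretic entropy `h_μ(T)`, using the fact that the defining
limit `lim_n H(⋁_{i<n} T^{-i}P)/n` equals the infimum over `n ≥ 1`. -/
noncomputable def ksEntropy (T : X → X) (μ : MeasureTheory.Measure X) : ℝ :=
  ⨆ P ∈ {P : Finset (Set X) | IsMeasPartition μ P},
    ⨅ n ∈ Ici (1 : ℕ), partEntropy μ (dynRefine T P n) / n

end Entropy


section FrostmanAux

open Function MeasureTheory

variable {X : Type*} [MetricSpace X]

lemma self_mem_bowenBall {T : X → X} {n : ℕ} {ε : ℝ} (hε : 0 < ε) (x : X) :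
    x ∈ bowenBall T n ε x := fun _ _ => by simpa using hε

lemma isOpen_bowenBall {T : X → X} (hT : Continuous T) {n : ℕ} {ε : ℝ} {x : X} :
    IsOpen (bowenBall T n ε x) := by
  have h : bowenBall T n ε x = ⋂ i ∈ Finset.range n, (T^[i]) ⁻¹' Metric.ball (T^[i] x) ε := by
    ext y
    simp [bowenBall, Metric.mem_ball, dist_comm]
  rw [h]
  exact isOpen_biInter_finset fun i _ => Metric.isOpen_ball.preimage (hT.iterate i)

lemma ballWeight_pos (T : X → X) (f : X → ℝ) (s ε : ℝ) (q : X × ℕ) :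
    0 < ballWeight T f s ε q := ENNReal.ofReal_pos.mpr (Real.exp_pos _)

lemma ballWeight_ne_top (T : X → X) (f : X → ℝ) (s ε : ℝ) (q : X × ℕ) :
    ballWeight T f s ε q ≠ ∞ := ENNReal.ofReal_ne_top

variable (T : X → X) (f : X → ℝ) (K : Set X) (s : ℝ) (N : ℕ) (ε : ℝ)

/-- Covering families for the Frostman argument, encoded as coefficient functions. -/
def frostCov (g : X → ℝ) (a : X × ℕ → ℝ≥0∞) : Prop :=
  (Function.support a).Countable ∧ (∀ q, a q ≠ 0 → N ≤ q.2) ∧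
    ∀ z ∈ K, ENNReal.ofReal (g z) ≤
      ∑' q : X × ℕ, a q * (bowenBall T q.2 ε q.1).indicator 1 z

/-- The weighted covering quantity for a general function `g`. -/
noncomputable def frostW (g : X → ℝ) : ℝ≥0∞ :=
  ⨅ (a : X × ℕ → ℝ≥0∞) (_ : frostCov T K N ε g a),
    ∑' q : X × ℕ, a q * ballWeight T f s ε q

lemma frostW_mono {g h : X → ℝ} (hgh : ∀ z ∈ K, g z ≤ h z) :
    frostW T f K s N ε g ≤ frostW T f K s N ε h :=
  le_iInf₂ fun a ha => iInf₂_le a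
    ⟨ha.1, ha.2.1, fun z hz => (ENNReal.ofReal_le_ofReal (hgh z hz)).trans (ha.2.2 z hz)⟩

lemma frostW_eq_zero {g : X → ℝ} (hg : ∀ z ∈ K, g z ≤ 0) :
    frostW T f K s N ε g = 0 := by
  refine le_antisymm ?_ zero_le
  have hcov : frostCov T K N ε g 0 := by
    refine ⟨by simp, by simp, fun z hz => by simp [ENNReal.ofReal_eq_zero.mpr (hg z hz)]⟩
  have hle : frostW T f K s N ε g ≤
      ∑' q : X × ℕ, (0 : X × ℕ → ℝ≥0∞) q * ballWeight T f s ε q := iInf₂_le _ hcov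
  simpa using hle

lemma frostW_add_le (g h : X → ℝ) :
    frostW T f K s N ε (fun z => g z + h z) ≤ frostW T f K s N ε g + frostW T f K s N ε h := by
  refine ENNReal.le_of_forall_pos_le_add fun δ hδ htop => ?_
  have hδ2 : ((δ : ℝ≥0∞) / 2) ≠ 0 := by
    simp [ENNReal.div_eq_zero_iff, hδ.ne']
  have hgfin : frostW T f K s N ε g ≠ ∞ := (lt_of_le_of_lt le_self_add htop).ne
  have hhfin : frostW T f K s N ε h ≠ ∞ := (lt_of_le_of_lt le_add_self htop).ne
  have h1 : frostW T f K s N ε g < frostW T f K s N ε g + δ / 2 :=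
    ENNReal.lt_add_right hgfin hδ2
  have h2 : frostW T f K s N ε h < frostW T f K s N ε h + δ / 2 :=
    ENNReal.lt_add_right hhfin hδ2
  rw [frostW, iInf_lt_iff] at h1 h2
  obtain ⟨a₁, h1⟩ := h1
  rw [iInf_lt_iff] at h1
  obtain ⟨hc₁, h1⟩ := h1
  obtain ⟨a₂, h2⟩ := h2
  rw [iInf_lt_iff] at h2
  obtain ⟨hc₂, h2⟩ := h2
  have hcov : frostCov T K N ε (fun z => g z + h z) (a₁ + a₂) := by
    refine ⟨(hc₁.1.union hc₂.1).mono (support_add _ _), fun q hq => ?_, fun z hz => ?_⟩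
    · by_cases h1q : a₁ q = 0
      · exact hc₂.2.1 q (by simpa [h1q] using hq)
      · exact hc₁.2.1 q h1q
    · calc ENNReal.ofReal (g z + h z)
          ≤ ENNReal.ofReal (g z) + ENNReal.ofReal (h z) := ENNReal.ofReal_add_le
        _ ≤ (∑' q : X × ℕ, a₁ q * (bowenBall T q.2 ε q.1).indicator 1 z)
            + ∑' q : X × ℕ, a₂ q * (bowenBall T q.2 ε q.1).indicator 1 z :=
          add_le_add (hc₁.2.2 z hz) (hc₂.2.2 z hz)
        _ = ∑' q : X × ℕ, (a₁ + a₂) q * (bowenBall T q.2 ε q.1).indicator 1 z := by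
          rw [← ENNReal.tsum_add]
          exact tsum_congr fun q => by simp [add_mul]
  calc frostW T f K s N ε (fun z => g z + h z)
      ≤ ∑' q : X × ℕ, (a₁ + a₂) q * ballWeight T f s ε q := iInf₂_le _ hcov
    _ = (∑' q : X × ℕ, a₁ q * ballWeight T f s ε q)
        + ∑' q : X × ℕ, a₂ q * ballWeight T f s ε q := by
        rw [← ENNReal.tsum_add]
        exact tsum_congr fun q => by simp [add_mul]
    _ ≤ (frostW T f K s N ε g + δ / 2) + (frostW T f K s N ε h + δ / 2) :=
        add_le_add h1.le h2.le
    _ = frostW T f K s N ε g + frostW T f K s N ε h + δ := by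
        rw [add_add_add_comm, ENNReal.add_halves]

lemma frostW_smul_le {t : ℝ} (ht : 0 ≤ t) (g : X → ℝ) :
    frostW T f K s N ε (fun z => t * g z) ≤ ENNReal.ofReal t * frostW T f K s N ε g := by
  rcases eq_or_lt_of_le ht with rfl | htpos
  · rw [frostW_eq_zero T f K s N ε (g := fun z => 0 * g z) fun z _ => by simp]
    exact zero_le
  refine ENNReal.le_of_forall_pos_le_add fun δ hδ htop => ?_
  have hofr : ENNReal.ofReal t ≠ 0 := (ENNReal.ofReal_pos.mpr htpos).ne'
  have hWfin : frostW T f K s N ε g ≠ ∞ := by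
    intro hW
    rw [hW, ENNReal.mul_top hofr] at htop
    exact (lt_irrefl _ htop).elim
  set r : ℝ≥0∞ := (δ : ℝ≥0∞) / ENNReal.ofReal t with hr
  have hrne : r ≠ 0 := by
    simp [hr, ENNReal.div_eq_zero_iff, hδ.ne', ENNReal.ofReal_ne_top]
  have h1 : frostW T f K s N ε g < frostW T f K s N ε g + r :=
    ENNReal.lt_add_right hWfin hrne
  rw [frostW, iInf_lt_iff] at h1
  obtain ⟨a, h1⟩ := h1
  rw [iInf_lt_iff] at h1
  obtain ⟨hc, h1⟩ := h1
  have hcov : frostCov T K N ε (fun z => t * g z) (fun q => ENNReal.ofReal t * a q) := by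
    refine ⟨hc.1.mono (fun q hq => ?_), fun q hq => hc.2.1 q fun h0 => hq (by simp [h0]), fun z hz => ?_⟩
    · simp only [mem_support, ne_eq, mul_eq_zero, not_or] at hq
      exact hq.2
    · calc ENNReal.ofReal (t * g z) = ENNReal.ofReal t * ENNReal.ofReal (g z) :=
          ENNReal.ofReal_mul ht
        _ ≤ ENNReal.ofReal t * ∑' q : X × ℕ, a q * (bowenBall T q.2 ε q.1).indicator 1 z :=
          mul_le_mul_right (hc.2.2 z hz) _
        _ = ∑' q : X × ℕ, (ENNReal.ofReal t * a q) * (bowenBall T q.2 ε q.1).indicator 1 z := by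
          rw [← ENNReal.tsum_mul_left]
          exact tsum_congr fun q => (mul_assoc _ _ _).symm
  calc frostW T f K s N ε (fun z => t * g z)
      ≤ ∑' q : X × ℕ, (ENNReal.ofReal t * a q) * ballWeight T f s ε q := iInf₂_le _ hcov
    _ = ENNReal.ofReal t * ∑' q : X × ℕ, a q * ballWeight T f s ε q := by
        rw [← ENNReal.tsum_mul_left]
        exact tsum_congr fun q => (mul_assoc _ _ _)
    _ ≤ ENNReal.ofReal t * (frostW T f K s N ε g + r) := mul_le_mul_right h1.le _
    _ = ENNReal.ofReal t * frostW T f K s N ε g + ENNReal.ofReal t * r := mul_add _ _ _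
    _ ≤ ENNReal.ofReal t * frostW T f K s N ε g + δ := by
        rw [hr, ENNReal.mul_div_cancel hofr ENNReal.ofReal_ne_top]

lemma frostW_smul_eq {t : ℝ} (ht : 0 < t) (g : X → ℝ) :
    frostW T f K s N ε (fun z => t * g z) = ENNReal.ofReal t * frostW T f K s N ε g := by
  refine le_antisymm (frostW_smul_le T f K s N ε ht.le g) ?_
  have h2 := frostW_smul_le T f K s N ε (t := t⁻¹) (by positivity) (fun z => t * g z)
  have h3 : (fun z => t⁻¹ * (t * g z)) = g := funext fun z => by
    rw [← mul_assoc, inv_mul_cancel₀ ht.ne', one_mul]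
  rw [show (fun z => t⁻¹ * ((fun z => t * g z) z)) = g from h3] at h2
  calc ENNReal.ofReal t * frostW T f K s N ε g
      ≤ ENNReal.ofReal t * (ENNReal.ofReal t⁻¹ * frostW T f K s N ε (fun z => t * g z)) :=
        mul_le_mul_right h2 _
    _ = frostW T f K s N ε (fun z => t * g z) := by
        rw [← mul_assoc, ← ENNReal.ofReal_mul ht.le, mul_inv_cancel₀ ht.ne',
          ENNReal.ofReal_one, one_mul]

lemma frostW_lt_top [CompactSpace X] (hT : Continuous T) (hK : IsCompact K) {hε' : 0 < ε}
    {g : X → ℝ} (hg : Continuous g) :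
    frostW T f K s N ε g < ∞ := by
  classical
  rcases isEmpty_or_nonempty X with hX | hX
  · have h0 : frostW T f K s N ε g = 0 :=
      frostW_eq_zero T f K s N ε fun z _ => (IsEmpty.false z).elim
    simp [h0]
  obtain ⟨z₀, -, hz₀⟩ := isCompact_univ.exists_isMaxOn Set.univ_nonempty hg.continuousOn
  set M : ℝ≥0∞ := ENNReal.ofReal (max (g z₀) 0) with hM
  have hKcov : K ⊆ ⋃ x : X, bowenBall T N ε x := fun z _ =>
    Set.mem_iUnion.mpr ⟨z, self_mem_bowenBall hε' z⟩
  obtain ⟨t, ht⟩ := hK.elim_finite_subcover (fun x : X => bowenBall T N ε x)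
    (fun _ => isOpen_bowenBall hT) hKcov
  set a : X × ℕ → ℝ≥0∞ := fun q => if q.1 ∈ t ∧ q.2 = N then M else 0 with ha
  have hcov : frostCov T K N ε g a := by
    refine ⟨?_, fun q hq => ?_, fun z hz => ?_⟩
    · refine Set.Countable.mono (fun q hq => ?_) ((t.finite_toSet.prod (Set.finite_singleton N)).countable)
      rw [mem_support, ha] at hq
      by_cases h : q.1 ∈ t ∧ q.2 = N
      · exact ⟨h.1, h.2⟩
      · simp [h] at hq
    · rw [ha] at hq
      by_cases h : q.1 ∈ t ∧ q.2 = N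
      · exact le_of_eq h.2.symm
      · simp [h] at hq
    · obtain ⟨x, hxt, hzx⟩ := Set.mem_iUnion₂.mp (ht hz)
      have hx1 : ENNReal.ofReal (g z) ≤ M :=
        ENNReal.ofReal_le_ofReal ((hz₀ (Set.mem_univ z)).trans (le_max_left _ _))
      have hx2 : M = a (x, N) * (bowenBall T (x, N).2 ε (x, N).1).indicator 1 z := by
        rw [ha]
        simp [hxt, Set.indicator_of_mem hzx]
      exact hx1.trans (hx2.le.trans (ENNReal.le_tsum (x, N)))
  have hcost : (∑' q : X × ℕ, a q * ballWeight T f s ε q)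
      = ∑ q ∈ t ×ˢ {N}, a q * ballWeight T f s ε q := by
    refine tsum_eq_sum fun q hq => ?_
    have : ¬(q.1 ∈ t ∧ q.2 = N) := fun hcon =>
      hq (Finset.mem_product.mpr ⟨hcon.1, Finset.mem_singleton.mpr hcon.2⟩)
    rw [ha]
    simp [this]
  calc frostW T f K s N ε g ≤ ∑' q : X × ℕ, a q * ballWeight T f s ε q := iInf₂_le _ hcov
    _ < ∞ := by
        rw [hcost]
        refine ENNReal.sum_lt_top.mpr fun q _ => ?_
        have hane : a q ≠ ∞ := by
          by_cases h : q.1 ∈ t ∧ q.2 = N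
          · simp [ha, h, hM]
          · simp [ha, h]
        exact ENNReal.mul_lt_top hane.lt_top (ballWeight_ne_top T f s ε q).lt_top

lemma frostW_le_ballWeight {n : ℕ} (hn : N ≤ n) {x : X} {g : X → ℝ}
    (hg1 : ∀ z, g z ≤ 1) (hg0 : ∀ z, z ∉ bowenBall T n ε x → g z ≤ 0) :
    frostW T f K s N ε g ≤ ballWeight T f s ε (x, n) := by
  classical
  set a : X × ℕ → ℝ≥0∞ := fun q => if q = (x, n) then 1 else 0 with ha
  have hcov : frostCov T K N ε g a := by
    refine ⟨?_, fun q hq => ?_, fun z hz => ?_⟩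
    · refine Set.Countable.mono (fun q hq => ?_) (Set.countable_singleton (x, n))
      rw [mem_support, ha] at hq
      by_cases h : q = (x, n)
      · exact h
      · simp [h] at hq
    · rw [ha] at hq
      by_cases h : q = (x, n)
      · rw [h]; exact hn
      · simp [h] at hq
    · by_cases hzb : z ∈ bowenBall T n ε x
      · have hx1 : ENNReal.ofReal (g z) ≤ 1 := by
          simpa using ENNReal.ofReal_le_ofReal (hg1 z)
        have hx2 : (1 : ℝ≥0∞) = a (x, n) * (bowenBall T (x, n).2 ε (x, n).1).indicator 1 z := by
          rw [ha]; simp [Set.indicator_of_mem hzb]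
        exact hx1.trans (hx2.le.trans (ENNReal.le_tsum (x, n)))
      · simp [ENNReal.ofReal_eq_zero.mpr (hg0 z hzb)]
  calc frostW T f K s N ε g ≤ ∑' q : X × ℕ, a q * ballWeight T f s ε q := iInf₂_le _ hcov
    _ = ballWeight T f s ε (x, n) := by
        rw [tsum_eq_single (x, n) (fun q hq => by rw [ha]; simp [hq])]
        rw [ha]; simp

lemma tsum_image_support (a : X × ℕ → ℝ≥0∞) (g : X × ℕ × ℝ → ℝ≥0∞) :
    ∑' (p : ((fun q : X × ℕ => (q.1, q.2, (a q).toReal)) '' Function.support a :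
        Set (X × ℕ × ℝ))), g ↑p
      = ∑' (q : X × ℕ),
          (Function.support a).indicator (fun q => g (q.1, q.2, (a q).toReal)) q := by
  set φ : X × ℕ → X × ℕ × ℝ := fun q => (q.1, q.2, (a q).toReal) with hφ
  have hinj : Function.Injective φ := by
    intro p q h
    exact Prod.ext (congrArg (fun r : X × ℕ × ℝ => r.1) h)
      (congrArg (fun r : X × ℕ × ℝ => r.2.1) h)
  rw [tsum_subtype]
  rw [← hinj.tsum_eq (f := (φ '' Function.support a).indicator g)
    (Set.support_indicator_subset.trans (Set.image_subset_range φ _))]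
  refine tsum_congr fun q => ?_
  by_cases hq : q ∈ Function.support a
  · rw [Set.indicator_of_mem (Set.mem_image_of_mem φ hq), Set.indicator_of_mem hq]
  · rw [Set.indicator_of_notMem (fun h => hq ((hinj.mem_set_image).mp h)),
      Set.indicator_of_notMem hq]

lemma bowenW_le_frostW_one :
    bowenW T f K s N ε ≤ frostW T f K s N ε (fun _ => 1) := by
  classical
  refine le_iInf₂ fun a ha => ?_
  by_cases hfin : ∀ q, a q ≠ ∞
  · set φ : X × ℕ → X × ℕ × ℝ := fun q => (q.1, q.2, (a q).toReal) with hφ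
    set D : Set (X × ℕ × ℝ) := φ '' Function.support a with hD
    have hindeq : ∀ (w : X × ℕ → ℝ≥0∞),
        (∑' q : X × ℕ, (Function.support a).indicator
          (fun q => ENNReal.ofReal ((a q).toReal) * w q) q)
        = ∑' q : X × ℕ, a q * w q := by
      intro w
      refine tsum_congr fun q => ?_
      by_cases hq : q ∈ Function.support a
      · rw [Set.indicator_of_mem hq, ENNReal.ofReal_toReal (hfin q)]
      · rw [Set.indicator_of_notMem hq, (by simpa using hq : a q = 0), zero_mul]
    have hmem : ∀ p ∈ D, N ≤ p.2.1 ∧ 0 < p.2.2 := by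
      rintro p ⟨q, hq, rfl⟩
      exact ⟨ha.2.1 q hq, ENNReal.toReal_pos hq (hfin q)⟩
    have hDcov : ∀ z ∈ K, 1 ≤ ∑' p : D,
        (bowenBall T (p : X × ℕ × ℝ).2.1 ε (p : X × ℕ × ℝ).1).indicator
          (fun _ => ENNReal.ofReal (p : X × ℕ × ℝ).2.2) z := by
      intro z hz
      have h0 := ha.2.2 z hz
      rw [ENNReal.ofReal_one] at h0
      refine h0.trans (le_of_eq ?_)
      rw [tsum_image_support a
        (fun p => (bowenBall T p.2.1 ε p.1).indicator (fun _ => ENNReal.ofReal p.2.2) z)]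
      rw [← hindeq (fun q => (bowenBall T q.2 ε q.1).indicator 1 z)]
      refine tsum_congr fun q => ?_
      by_cases hq : q ∈ Function.support a
      · rw [Set.indicator_of_mem hq, Set.indicator_of_mem hq]
        by_cases hzb : z ∈ bowenBall T q.2 ε q.1
        · rw [Set.indicator_of_mem hzb, Set.indicator_of_mem hzb]
          simp
        · rw [Set.indicator_of_notMem hzb, Set.indicator_of_notMem hzb, mul_zero]
      · rw [Set.indicator_of_notMem hq, Set.indicator_of_notMem hq]
    have hcnt : D.Countable := ha.1.image φ
    have hle : bowenW T f K s N ε ≤ ∑' p : D,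
        ENNReal.ofReal (p : X × ℕ × ℝ).2.2 * ballWeight T f s ε
          ((p : X × ℕ × ℝ).1, (p : X × ℕ × ℝ).2.1) :=
      iInf₂_le D ⟨hcnt, hmem, hDcov⟩
    refine hle.trans (le_of_eq ?_)
    rw [tsum_image_support a (fun p => ENNReal.ofReal p.2.2 * ballWeight T f s ε (p.1, p.2.1))]
    rw [← hindeq (fun q => ballWeight T f s ε q)]
  · push_neg at hfin
    obtain ⟨q₀, hq₀⟩ := hfin
    have htop : (∑' q : X × ℕ, a q * ballWeight T f s ε q) = ∞ := by
      refine top_le_iff.mp ?_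
      have hle := ENNReal.le_tsum (f := fun q => a q * ballWeight T f s ε q) q₀
      rwa [hq₀, ENNReal.top_mul (ballWeight_pos T f s ε q₀).ne'] at hle
    rw [htop]
    exact le_top

end FrostmanAux


open MeasureTheory Function BoundedContinuousFunction NNReal in
/-- Frostman-type lemma: if `c := W(K,f,s,N,ε) > 0` then there is a Borel
probability measure `μ` with `μ(K) = 1` and
`μ(B_n(x,ε)) ≤ (1/c) exp(-ns + sup_{B_n(x,ε)} f_n)` for all `x` and `n ≥ N`
(stated multiplied through by `c`). -/
theorem frostman_weighted_pressure {X : Type*} [MetricSpace X] [CompactSpace X]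
    [MeasurableSpace X] [BorelSpace X]
    {T : X → X} (hT : Continuous T) {f : X → ℝ} (hf : Continuous f)
    {K : Set X} (hK : IsCompact K) (hKne : K.Nonempty)
    (s : ℝ) (N : ℕ) {ε : ℝ} (hε : 0 < ε)
    (hc : 0 < bowenW T f K s N ε) :
    ∃ μ : MeasureTheory.Measure X, MeasureTheory.IsProbabilityMeasure μ ∧ μ K = 1 ∧
      ∀ x : X, ∀ n : ℕ, N ≤ n →
        bowenW T f K s N ε * μ (bowenBall T n ε x) ≤ ballWeight T f s ε (x, n) := by
  classical
  haveI : Nonempty X := ⟨hKne.some⟩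
  set c : ℝ≥0∞ := bowenW T f K s N ε with hcdef
  have hWone_lt : frostW T f K s N ε (fun _ => (1 : ℝ)) < ∞ :=
    frostW_lt_top T f K s N ε hT hK (hε' := hε) continuous_const
  have hcne_top : c ≠ ∞ := ((bowenW_le_frostW_one T f K s N ε).trans_lt hWone_lt).ne
  have hcpos : 0 < c.toReal := ENNReal.toReal_pos hc.ne' hcne_top
  -- the sublinear functional
  set p : C(X, ℝ) → ℝ :=
    fun g => (frostW T f K s N ε (fun z => max (g z) 0)).toReal / c.toReal with hp
  have hWfin : ∀ g : C(X, ℝ), frostW T f K s N ε (fun z => max (g z) 0) ≠ ∞ := fun g =>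
    (frostW_lt_top T f K s N ε hT hK (hε' := hε) (g.continuous.max continuous_const)).ne
  have p_nonneg : ∀ g : C(X, ℝ), 0 ≤ p g := fun g =>
    div_nonneg ENNReal.toReal_nonneg hcpos.le
  have p_add : ∀ g h : C(X, ℝ), p (g + h) ≤ p g + p h := by
    intro g h
    have key : frostW T f K s N ε (fun z => max ((g + h) z) 0)
        ≤ frostW T f K s N ε (fun z => max (g z) 0)
          + frostW T f K s N ε (fun z => max (h z) 0) := by
      refine le_trans (frostW_mono T f K s N ε fun z _ => ?_)
        (frostW_add_le T f K s N ε _ _)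
      simp only [ContinuousMap.add_apply]
      exact max_le (add_le_add (le_max_left _ _) (le_max_left _ _))
        (add_nonneg (le_max_right _ _) (le_max_right _ _))
    have h2 := ENNReal.toReal_mono
      (by exact ENNReal.add_ne_top.mpr ⟨hWfin g, hWfin h⟩) key
    rw [ENNReal.toReal_add (hWfin g) (hWfin h)] at h2
    rw [hp]
    dsimp only
    rw [← add_div]
    exact (div_le_div_iff_of_pos_right hcpos).mpr h2
  have p_smul : ∀ t : ℝ, 0 < t → ∀ g : C(X, ℝ), p (t • g) = t * p g := by
    intro t ht g
    have h1 : (fun z => max ((t • g) z) 0) = fun z => t * max (g z) 0 := by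
      funext z
      rw [ContinuousMap.smul_apply, smul_eq_mul, mul_max_of_nonneg _ _ ht.le, mul_zero]
    rw [hp]
    dsimp only
    rw [h1, frostW_smul_eq T f K s N ε ht, ENNReal.toReal_mul,
      ENNReal.toReal_ofReal ht.le, mul_div_assoc]
  -- Hahn-Banach extension of t•1 ↦ t
  have hone : (1 : C(X, ℝ)) ≠ 0 := by
    intro h
    have := ContinuousMap.congr_fun h (Classical.arbitrary X)
    simp at this
  have hp_one : 1 ≤ p 1 := by
    have h1 : (fun z => max ((1 : C(X, ℝ)) z) 0) = fun _ : X => (1 : ℝ) := by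
      funext z; simp
    have h2 : c.toReal ≤ (frostW T f K s N ε (fun _ : X => (1 : ℝ))).toReal :=
      ENNReal.toReal_mono hWone_lt.ne (bowenW_le_frostW_one T f K s N ε)
    rw [hp]
    dsimp only
    rw [h1]
    exact (one_le_div hcpos).mpr h2
  have hf₀ : ∀ v : (LinearPMap.mkSpanSingleton (K := ℝ) (L := ℝ) (σ := RingHom.id ℝ) (1 : C(X, ℝ)) (1 : ℝ) hone).domain,
      (LinearPMap.mkSpanSingleton (K := ℝ) (L := ℝ) (σ := RingHom.id ℝ) (1 : C(X, ℝ)) (1 : ℝ) hone) v ≤ p v := by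
    rintro ⟨v, hv⟩
    obtain ⟨t, rfl⟩ := Submodule.mem_span_singleton.mp hv
    have hval : (LinearPMap.mkSpanSingleton (K := ℝ) (L := ℝ) (σ := RingHom.id ℝ) (1 : C(X, ℝ)) (1 : ℝ) hone)
        ⟨t • (1 : C(X, ℝ)), hv⟩ = t • (1 : ℝ) :=
      LinearPMap.mkSpanSingleton'_apply _ _ _ t _
    rw [hval, smul_eq_mul, mul_one]
    rcases lt_trichotomy t 0 with htn | rfl | htp
    · have h0 : p (t • (1 : C(X, ℝ))) = 0 := by
        rw [hp]; dsimp only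
        have : (fun z => max ((t • (1 : C(X, ℝ))) z) 0) = fun _ : X => (0:ℝ) := by
          funext z
          simp only [ContinuousMap.smul_apply, ContinuousMap.one_apply, smul_eq_mul, mul_one]
          exact max_eq_right htn.le
        rw [this, frostW_eq_zero T f K s N ε (fun z _ => le_rfl), ENNReal.toReal_zero, zero_div]
      rw [h0]; exact htn.le
    · have h0 : p ((0:ℝ) • (1 : C(X, ℝ))) = 0 := by
        rw [hp]; dsimp only
        have : (fun z => max (((0:ℝ) • (1 : C(X, ℝ))) z) 0) = fun _ : X => (0:ℝ) := by
          funext z; simp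
        rw [this, frostW_eq_zero T f K s N ε (fun z _ => le_rfl), ENNReal.toReal_zero, zero_div]
      rw [h0]
    · rw [p_smul t htp]
      calc t = t * 1 := (mul_one t).symm
        _ ≤ t * p 1 := by nlinarith [hp_one]
  obtain ⟨L, hL₁, hLle⟩ := exists_extension_of_le_sublinear
    (LinearPMap.mkSpanSingleton (K := ℝ) (L := ℝ) (σ := RingHom.id ℝ) (1 : C(X, ℝ)) (1 : ℝ) hone) p p_smul p_add hf₀
  have hL1 : L 1 = 1 := by
    have := hL₁ ⟨(1 : C(X, ℝ)), Submodule.mem_span_singleton_self _⟩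
    rwa [LinearPMap.mkSpanSingleton_apply] at this
  have hpos : ∀ g : C(X, ℝ), (∀ z, 0 ≤ g z) → 0 ≤ L g := by
    intro g hg
    have h1 : p (-g) = 0 := by
      rw [hp]; dsimp only
      have : (fun z => max ((-g) z) 0) = fun _ : X => (0:ℝ) := by
        funext z
        simp only [ContinuousMap.neg_apply]
        exact max_eq_right (neg_nonpos.mpr (hg z))
      rw [this, frostW_eq_zero T f K s N ε (fun z _ => le_rfl), ENNReal.toReal_zero, zero_div]
    have h2 := hLle (-g)
    rw [map_neg, h1] at h2
    linarith
  -- the NNReal-linear functional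
  set toR : CompactlySupportedContinuousMap X ℝ≥0 → C(X, ℝ) := fun F =>
    ⟨fun x => ((F x : ℝ≥0) : ℝ), NNReal.continuous_coe.comp F.continuous⟩ with htoR
  have hLposF : ∀ F : CompactlySupportedContinuousMap X ℝ≥0, 0 ≤ L (toR F) := fun F => hpos _ fun z => (F z).2
  set Λ : CompactlySupportedContinuousMap X ℝ≥0 →ₗ[ℝ≥0] ℝ≥0 :=
    { toFun := fun F => Real.toNNReal (L (toR F)),
      map_add' := fun F G => by
        have hadd : toR (F + G) = toR F + toR G := by
          ext x; simp [htoR]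
        rw [hadd, map_add]
        exact Real.toNNReal_add (hLposF F) (hLposF G)
      map_smul' := fun r F => by
        have hsm : toR (r • F) = (r : ℝ) • toR F := by
          ext x; simp [htoR, NNReal.smul_def]
        rw [hsm, _root_.map_smul]
        simp only [smul_eq_mul, RingHom.id_apply]
        rw [Real.toNNReal_mul r.coe_nonneg, Real.toNNReal_coe] } with hΛ
  have hΛ_eq : ∀ F : CompactlySupportedContinuousMap X ℝ≥0, Λ F = Real.toNNReal (L (toR F)) := fun F => rfl
  -- the content
  have sup_disjoint : ∀ K₁ K₂ : TopologicalSpace.Compacts X, Disjoint (K₁ : Set X) (K₂ : Set X) →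
      IsClosed (K₁ : Set X) → IsClosed (K₂ : Set X) →
      rieszContentAux Λ (K₁ ⊔ K₂) = rieszContentAux Λ K₁ + rieszContentAux Λ K₂ := by
    intro K₁ K₂ hdisj h1 h2
    refine le_antisymm (rieszContentAux_sup_le Λ K₁ K₂) ?_
    rw [rieszContentAux]
    refine le_csInf (rieszContentAux_image_nonempty Λ _) ?_
    rintro b ⟨F, hF, rfl⟩
    obtain ⟨u, hu0, hu1, hu01⟩ := exists_continuous_zero_one_of_isClosed h2 h1 hdisj.symm
    set uN : C(X, ℝ≥0) := ⟨fun x => Real.toNNReal (u x),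
      continuous_real_toNNReal.comp u.continuous⟩ with huN
    have huN1 : ∀ x, uN x ≤ 1 := fun x => Real.toNNReal_le_one.mpr (hu01 x).2
    set F₁ : CompactlySupportedContinuousMap X ℝ≥0 :=
      CompactlySupportedContinuousMap.continuousMapEquiv (F.toContinuousMap * uN) with hF₁
    set F₂ : CompactlySupportedContinuousMap X ℝ≥0 :=
      CompactlySupportedContinuousMap.continuousMapEquiv (F.toContinuousMap * (1 - uN)) with hF₂
    have hFsum : F = F₁ + F₂ := by
      ext x
      have hx : F x = F₁ x + F₂ x := by
        show F x = F.toContinuousMap x * uN x + F.toContinuousMap x * (1 - uN x)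
        rw [← mul_add, add_tsub_cancel_of_le (huN1 x), mul_one]
        rfl
      exact congrArg _ hx
    have e1 : rieszContentAux Λ K₁ ≤ Λ F₁ := by
      refine rieszContentAux_le Λ fun x hx => ?_
      have hux : uN x = 1 := by
        rw [huN]
        simp only [ContinuousMap.coe_mk]
        rw [hu1 hx]
        simp
      show (1 : ℝ≥0) ≤ F.toContinuousMap x * uN x
      rw [hux, mul_one]
      exact hF x (Set.mem_union_left _ hx)
    have e2 : rieszContentAux Λ K₂ ≤ Λ F₂ := by
      refine rieszContentAux_le Λ fun x hx => ?_
      have hux : uN x = 0 := by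
        rw [huN]
        simp only [ContinuousMap.coe_mk]
        rw [hu0 hx]
        simp
      show (1 : ℝ≥0) ≤ F.toContinuousMap x * ((1 : C(X, ℝ≥0)) x - uN x)
      rw [hux]
      show (1 : ℝ≥0) ≤ F x * (1 - 0)
      rw [tsub_zero, mul_one]
      exact hF x (Set.mem_union_right _ hx)
    calc rieszContentAux Λ K₁ + rieszContentAux Λ K₂ ≤ Λ F₁ + Λ F₂ := add_le_add e1 e2
      _ = Λ (F₁ + F₂) := (map_add Λ F₁ F₂).symm
      _ = Λ F := by rw [← hFsum]
  set theContent : Content X :=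
    { toFun := fun C => rieszContentAux Λ C,
      mono' := fun K₁ K₂ h => rieszContentAux_mono Λ h,
      sup_disjoint' := sup_disjoint,
      sup_le' := fun K₁ K₂ => rieszContentAux_sup_le Λ K₁ K₂ } with hcont
  set μ : Measure X := theContent.measure with hμdef
  have hmeas_open : ∀ (U : Set X) (hU : IsOpen U),
      μ U = theContent.innerContent ⟨U, hU⟩ := by
    intro U hU
    rw [hμdef, Content.measure_apply _ hU.measurableSet]
    exact theContent.outerMeasure_opens ⟨U, hU⟩
  have hinner : ∀ (U : Set X) (hU : IsOpen U),
      theContent.innerContent ⟨U, hU⟩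
        = ⨆ (C : TopologicalSpace.Compacts X) (_ : (C : Set X) ⊆ U),
            (rieszContentAux Λ C : ℝ≥0∞) := by
    intro U hU
    rfl
  -- the key estimate via Urysohn functions
  have key : ∀ (C : TopologicalSpace.Compacts X) (g : C(X, ℝ)),
      (∀ x, g x ∈ Set.Icc (0:ℝ) 1) → Set.EqOn g 1 (C : Set X) →
      (rieszContentAux Λ C : ℝ≥0∞) ≤ ENNReal.ofReal (p g) := by
    intro C g hg01 hgC
    set gN : CompactlySupportedContinuousMap X ℝ≥0 := CompactlySupportedContinuousMap.continuousMapEquiv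
      ⟨fun x => Real.toNNReal (g x), continuous_real_toNNReal.comp g.continuous⟩ with hgN
    have h1 : rieszContentAux Λ C ≤ Λ gN := by
      refine rieszContentAux_le Λ fun x hx => ?_
      show (1 : ℝ≥0) ≤ Real.toNNReal (g x)
      rw [hgC hx]
      simp
    have h2 : toR gN = g := by
      ext x
      show ((Real.toNNReal (g x) : ℝ≥0) : ℝ) = g x
      exact Real.coe_toNNReal _ (hg01 x).1
    have h3 : Λ gN ≤ Real.toNNReal (p g) := by
      rw [hΛ_eq, h2]
      exact Real.toNNReal_mono (hLle g)
    calc (rieszContentAux Λ C : ℝ≥0∞) ≤ (Λ gN : ℝ≥0∞) := ENNReal.coe_le_coe.mpr h1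
      _ ≤ (Real.toNNReal (p g) : ℝ≥0∞) := ENNReal.coe_le_coe.mpr h3
      _ = ENNReal.ofReal (p g) := rfl
  -- μ is a probability measure
  set one_c : CompactlySupportedContinuousMap X ℝ≥0 :=
    CompactlySupportedContinuousMap.continuousMapEquiv (1 : C(X, ℝ≥0)) with hone_c
  have hΛ1 : Λ one_c = 1 := by
    have h1 : toR one_c = 1 := by ext x; show (((1 : C(X, ℝ≥0)) x : ℝ≥0) : ℝ) = 1; simp
    rw [hΛ_eq, h1, hL1]
    simp
  have hμuniv : μ Set.univ = 1 := by
    rw [hmeas_open Set.univ isOpen_univ]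
    refine le_antisymm ?_ ?_
    · refine le_trans (theContent.innerContent_le ⟨Set.univ, isOpen_univ⟩
        ⟨Set.univ, isCompact_univ⟩ subset_rfl) ?_
      have : rieszContentAux Λ ⟨Set.univ, isCompact_univ⟩ ≤ Λ one_c :=
        rieszContentAux_le Λ fun x _ => le_rfl
      calc (theContent ⟨Set.univ, isCompact_univ⟩ : ℝ≥0∞)
          ≤ (Λ one_c : ℝ≥0∞) := ENNReal.coe_le_coe.mpr this
        _ = 1 := by rw [hΛ1]; simp
    · refine le_trans ?_ (theContent.le_innerContent ⟨Set.univ, isCompact_univ⟩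
        ⟨Set.univ, isOpen_univ⟩ subset_rfl)
      have h1 : (1 : ℝ≥0) ≤ rieszContentAux Λ ⟨Set.univ, isCompact_univ⟩ := by
        refine le_csInf (rieszContentAux_image_nonempty Λ _) ?_
        rintro b ⟨F, hF, rfl⟩
        have hd : ∀ z, 0 ≤ (toR F - 1 : C(X, ℝ)) z := fun z => by
          simp only [ContinuousMap.sub_apply, ContinuousMap.one_apply, htoR,
            ContinuousMap.coe_mk]
          have : (1 : ℝ≥0) ≤ F z := hF z trivial
          exact sub_nonneg.mpr (by exact_mod_cast this)
        have hsplit : L (toR F) = L 1 + L (toR F - 1) := by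
          rw [← map_add]
          congr 1
          abel
        have h2 : (1:ℝ) ≤ L (toR F) := by
          have := hpos _ hd
          rw [hsplit, hL1]
          linarith
        rw [hΛ_eq]
        exact Real.one_le_toNNReal.mpr h2
      calc (1 : ℝ≥0∞) ≤ (rieszContentAux Λ ⟨Set.univ, isCompact_univ⟩ : ℝ≥0∞) := by
            exact_mod_cast h1
        _ = (theContent ⟨Set.univ, isCompact_univ⟩ : ℝ≥0∞) := rfl
  have hμcompl : μ Kᶜ = 0 := by
    rw [hmeas_open Kᶜ hK.isClosed.isOpen_compl]
    refine le_antisymm ?_ zero_le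
    rw [hinner]
    refine iSup_le fun C => iSup_le fun hC => ?_
    obtain ⟨u, hu0, hu1, hu01⟩ := exists_continuous_zero_one_of_isClosed hK.isClosed
      C.isCompact.isClosed (Set.disjoint_left.mpr fun a haK haC => hC haC haK)
    refine le_trans (key C u hu01 hu1) ?_
    have hpu : p u = 0 := by
      rw [hp]; dsimp only
      rw [frostW_eq_zero T f K s N ε (fun z hz => by simp [hu0 hz]),
        ENNReal.toReal_zero, zero_div]
    rw [hpu]
    simp
  have hμK : μ K = 1 := by
    have h1 : μ Set.univ ≤ μ K + μ Kᶜ := by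
      rw [← Set.union_compl_self K]
      exact measure_union_le _ _
    rw [hμuniv, hμcompl, add_zero] at h1
    exact le_antisymm (by rw [← hμuniv]; exact measure_mono (Set.subset_univ K)) h1
  refine ⟨μ, ⟨hμuniv⟩, hμK, ?_⟩
  intro x n hn
  have hBopen : IsOpen (bowenBall T n ε x) := isOpen_bowenBall hT
  rw [hmeas_open _ hBopen]
  have hinb : theContent.innerContent ⟨bowenBall T n ε x, hBopen⟩
      ≤ ballWeight T f s ε (x, n) / c := by
    rw [hinner]
    refine iSup_le fun C => iSup_le fun hC => ?_
    obtain ⟨u, hu0, hu1, hu01⟩ := exists_continuous_zero_one_of_isClosed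
      hBopen.isClosed_compl C.isCompact.isClosed
      (Set.disjoint_left.mpr fun a haB haC => haB (hC haC))
    refine le_trans (key C u hu01 hu1) ?_
    have hW : frostW T f K s N ε (fun z => max (u z) 0) ≤ ballWeight T f s ε (x, n) := by
      refine frostW_le_ballWeight T f K s N ε hn (fun z => max_le (hu01 z).2 zero_le_one)
        (fun z hz => ?_)
      rw [hu0 hz]
      simp
    have hpu : p u ≤ (ballWeight T f s ε (x, n)).toReal / c.toReal := by
      rw [hp]; dsimp only
      exact (div_le_div_iff_of_pos_right hcpos).mpr
        (ENNReal.toReal_mono (ballWeight_ne_top T f s ε (x, n)) hW)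
    calc ENNReal.ofReal (p u)
        ≤ ENNReal.ofReal ((ballWeight T f s ε (x, n)).toReal / c.toReal) :=
          ENNReal.ofReal_le_ofReal hpu
      _ = ENNReal.ofReal (ballWeight T f s ε (x, n)).toReal / ENNReal.ofReal c.toReal :=
          ENNReal.ofReal_div_of_pos hcpos
      _ = ballWeight T f s ε (x, n) / c := by
          rw [ENNReal.ofReal_toReal (ballWeight_ne_top T f s ε (x, n)),
            ENNReal.ofReal_toReal hcne_top]
  calc c * theContent.innerContent ⟨bowenBall T n ε x, hBopen⟩
      ≤ c * (ballWeight T f s ε (x, n) / c) := mul_le_mul_right hinb c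
    _ ≤ ballWeight T f s ε (x, n) := ENNReal.mul_div_le
end

section
/- Let U be a closed-open (clopen) partition of X, N ∈ ℕ, s ∈ ℝ, f ∈ C(X). If E_i ⊆ E_{i+1} for all i and E = ⋃_i E_i, then M_N^s(U,f,E) = lim_{i→∞} M_N^s(U,f,E_i). -/
open Set Filter
open scoped ENNReal

section MUNAux
set_option linter.unusedSectionVars false
set_option linter.unusedVariables false

open Classical

variable {X : Type*} [MetricSpace X]

/-- Prefix order on strings. -/
def NodePre (V U : Σ n : ℕ, Fin n → Set X) : Prop :=
  ∃ h : V.1 ≤ U.1, ∀ (j : ℕ) (hj : j < V.1), V.2 ⟨j, hj⟩ = U.2 ⟨j, lt_of_lt_of_le hj h⟩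

lemma nodePre_rfl (U : Σ n : ℕ, Fin n → Set X) : NodePre U U :=
  ⟨le_rfl, fun _ _ => rfl⟩

lemma nodePre_trans {W V U : Σ n : ℕ, Fin n → Set X} (h1 : NodePre W V) (h2 : NodePre V U) :
    NodePre W U := by
  obtain ⟨a, ha⟩ := h1
  obtain ⟨b, hb⟩ := h2
  exact ⟨a.trans b, fun j hj => (ha j hj).trans (hb j (lt_of_lt_of_le hj a))⟩

lemma node_ext {U V : Σ n : ℕ, Fin n → Set X} (h : U.1 = V.1)
    (h2 : ∀ (j : ℕ) (hj : j < U.1) (hj' : j < V.1), U.2 ⟨j, hj⟩ = V.2 ⟨j, hj'⟩) : U = V := by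
  obtain ⟨n, F⟩ := U
  obtain ⟨m, G⟩ := V
  dsimp at h
  subst h
  simp only [Sigma.mk.inj_iff, heq_eq_eq, true_and]
  funext j
  exact h2 j.1 j.2 j.2

lemma nodePre_antisymm_len {V U : Σ n : ℕ, Fin n → Set X} (h : NodePre V U)
    (hlen : U.1 ≤ V.1) : V = U := by
  obtain ⟨a, ha⟩ := h
  exact node_ext (le_antisymm a hlen) (fun j hj hj' => ha j hj)

/-- Two prefixes of a common string are comparable. -/
lemma nodePre_of_common {A B U : Σ n : ℕ, Fin n → Set X} (hA : NodePre A U) (hB : NodePre B U)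
    (hlen : A.1 ≤ B.1) : NodePre A B := by
  obtain ⟨a, ha⟩ := hA
  obtain ⟨b, hb⟩ := hB
  exact ⟨hlen, fun j hj => (ha j hj).trans (hb j (lt_of_lt_of_le hj hlen)).symm⟩

lemma mem_cylinder_iff {T : X → X} {U : Σ n : ℕ, Fin n → Set X} {x : X} :
    x ∈ cylinder T U ↔ ∀ j : Fin U.1, T^[j.1] x ∈ U.2 j := by
  simp [cylinder]

lemma cylinder_anti {T : X → X} {V U : Σ n : ℕ, Fin n → Set X} (h : NodePre V U) :
    cylinder T U ⊆ cylinder T V := by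
  intro x hx
  rw [mem_cylinder_iff] at hx ⊢
  obtain ⟨a, ha⟩ := h
  intro j
  rw [show V.2 j = U.2 ⟨j.1, lt_of_lt_of_le j.2 a⟩ from ha j.1 j.2]
  exact hx _

end MUNAux
section MUNAux2

set_option linter.unusedSectionVars false

variable {X : Type*} [MetricSpace X]

def NodeValid (𝒰 : Finset (Set X)) (N : ℕ) (U : Σ n : ℕ, Fin n → Set X) : Prop :=
  N ≤ U.1 ∧ ∀ j, U.2 j ∈ 𝒰

noncomputable def partElem (𝒰 : Finset (Set X)) (x : X) : Set X := by
  classical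
  exact if h : ∃ A ∈ 𝒰, x ∈ A then h.choose else ∅

lemma partElem_spec {𝒰 : Finset (Set X)} (hcov : (⋃ A ∈ 𝒰, A) = Set.univ) (x : X) :
    partElem 𝒰 x ∈ 𝒰 ∧ x ∈ partElem 𝒰 x := by
  classical
  have h : ∃ A ∈ 𝒰, x ∈ A := by
    have := hcov ▸ Set.mem_univ x
    simpa using this
  rw [partElem]
  simp only [dif_pos h]
  exact ⟨h.choose_spec.1, h.choose_spec.2⟩

lemma partElem_eq {𝒰 : Finset (Set X)} (h𝒰 : IsClopenPartition 𝒰) {A : Set X} (hA : A ∈ 𝒰)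
    {x : X} (hx : x ∈ A) : A = partElem 𝒰 x := by
  by_contra hne
  have hP := partElem_spec h𝒰.2.1 x
  exact Set.disjoint_left.1 (h𝒰.2.2 hA hP.1 hne) hx hP.2

noncomputable def itin (T : X → X) (𝒰 : Finset (Set X)) (x : X) (n : ℕ) :
    Σ n : ℕ, Fin n → Set X :=
  ⟨n, fun j => partElem 𝒰 (T^[j.1] x)⟩

lemma mem_cyl_itin {T : X → X} {𝒰 : Finset (Set X)} (hcov : (⋃ A ∈ 𝒰, A) = Set.univ)
    (x : X) (n : ℕ) : x ∈ cylinder T (itin T 𝒰 x n) := by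
  rw [mem_cylinder_iff]
  intro j
  exact (partElem_spec hcov (T^[j.1] x)).2

lemma itin_pre {T : X → X} {𝒰 : Finset (Set X)} {x : X} {m n : ℕ} (h : m ≤ n) :
    NodePre (itin T 𝒰 x m) (itin T 𝒰 x n) :=
  ⟨h, fun j hj => rfl⟩

lemma eq_itin {T : X → X} {𝒰 : Finset (Set X)} (h𝒰 : IsClopenPartition 𝒰)
    {U : Σ n : ℕ, Fin n → Set X} (hU : ∀ j, U.2 j ∈ 𝒰) {x : X} (hx : x ∈ cylinder T U) :
    U = itin T 𝒰 x U.1 := by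
  refine node_ext ?_ ?_
  · rfl
  · intro j hj hj'
    exact partElem_eq h𝒰 (hU ⟨j, hj⟩) ((mem_cylinder_iff.1 hx) ⟨j, hj⟩)

/-- Two nonempty-cylinder strings containing a common point are comparable. -/
lemma nodePre_of_mem {T : X → X} {𝒰 : Finset (Set X)} (h𝒰 : IsClopenPartition 𝒰)
    {U V : Σ n : ℕ, Fin n → Set X} (hU : ∀ j, U.2 j ∈ 𝒰) (hV : ∀ j, V.2 j ∈ 𝒰) {x : X}
    (hxU : x ∈ cylinder T U) (hxV : x ∈ cylinder T V) (hlen : U.1 ≤ V.1) : NodePre U V := by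
  rw [eq_itin h𝒰 hU hxU, eq_itin h𝒰 hV hxV]
  exact itin_pre hlen

end MUNAux2
section MUNAux3

set_option linter.unusedSectionVars false
set_option linter.unusedVariables false

variable {X : Type*} [MetricSpace X]

noncomputable def nodeCost (T : X → X) (f : X → ℝ) (s : ℝ)
    (Λ : Set (Σ n : ℕ, Fin n → Set X)) : ℝ≥0∞ :=
  ∑' U : (Σ n : ℕ, Fin n → Set X), Λ.indicator (cylWeight T f s) U

lemma tsum_subtype_eq_nodeCost (T : X → X) (f : X → ℝ) (s : ℝ)
    (Λ : Set (Σ n : ℕ, Fin n → Set X)) :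
    ∑' V : Λ, cylWeight T f s V = nodeCost T f s Λ :=
  tsum_subtype Λ (cylWeight T f s)

lemma nodeCost_mono {T : X → X} {f : X → ℝ} {s : ℝ}
    {Λ Λ' : Set (Σ n : ℕ, Fin n → Set X)} (h : Λ ⊆ Λ') :
    nodeCost T f s Λ ≤ nodeCost T f s Λ' :=
  Summable.tsum_le_tsum (fun U => Set.indicator_le_indicator_of_subset h (fun _ => zero_le) U)
    ENNReal.summable ENNReal.summable

lemma nodeCost_union_le (T : X → X) (f : X → ℝ) (s : ℝ)
    (A B : Set (Σ n : ℕ, Fin n → Set X)) :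
    nodeCost T f s (A ∪ B) ≤ nodeCost T f s A + nodeCost T f s B := by
  rw [nodeCost, nodeCost, nodeCost, ← ENNReal.tsum_add]
  refine Summable.tsum_le_tsum (fun U => ?_) ENNReal.summable ENNReal.summable
  by_cases hA : U ∈ A
  · refine le_add_right ?_
    rw [Set.indicator_of_mem (Set.mem_union_left _ hA), Set.indicator_of_mem hA]
  by_cases hB : U ∈ B
  · refine le_add_left ?_
    rw [Set.indicator_of_mem (Set.mem_union_right _ hB), Set.indicator_of_mem hB]
  · rw [Set.indicator_of_notMem (fun h => h.elim hA hB)]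
    exact zero_le

lemma nodeCost_iUnion_le {ι : Type*} [Countable ι] (T : X → X) (f : X → ℝ) (s : ℝ)
    (A : ι → Set (Σ n : ℕ, Fin n → Set X)) :
    nodeCost T f s (⋃ i, A i) ≤ ∑' i, nodeCost T f s (A i) := by
  have h1 : nodeCost T f s (⋃ i, A i) ≤
      ∑' (U : (Σ n : ℕ, Fin n → Set X)) (i : ι), (A i).indicator (cylWeight T f s) U := by
    refine Summable.tsum_le_tsum (fun U => ?_) ENNReal.summable ENNReal.summable
    by_cases hU : U ∈ ⋃ i, A i
    · obtain ⟨i, hi⟩ := Set.mem_iUnion.1 hU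
      rw [Set.indicator_of_mem hU]
      calc cylWeight T f s U = (A i).indicator (cylWeight T f s) U :=
            (Set.indicator_of_mem hi _).symm
        _ ≤ _ := ENNReal.le_tsum i
    · rw [Set.indicator_of_notMem hU]
      exact zero_le
  exact h1.trans (le_of_eq (ENNReal.tsum_comm))

lemma sum_le_nodeCost {T : X → X} {f : X → ℝ} {s : ℝ}
    {Λ : Set (Σ n : ℕ, Fin n → Set X)} (F : Finset (Σ n : ℕ, Fin n → Set X))
    (hF : ↑F ⊆ Λ) : ∑ U ∈ F, cylWeight T f s U ≤ nodeCost T f s Λ := by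
  calc ∑ U ∈ F, cylWeight T f s U = ∑ U ∈ F, Λ.indicator (cylWeight T f s) U := by
        refine Finset.sum_congr rfl fun U hU => ?_
        rw [Set.indicator_of_mem (hF hU)]
    _ ≤ nodeCost T f s Λ := ENNReal.sum_le_tsum F

lemma nodeCost_singleton (T : X → X) (f : X → ℝ) (s : ℝ) (V : Σ n : ℕ, Fin n → Set X) :
    nodeCost T f s {V} = cylWeight T f s V := by
  rw [nodeCost]
  rw [tsum_eq_single V (fun U hU => Set.indicator_of_notMem (by simpa using hU) _)]
  exact Set.indicator_of_mem (Set.mem_singleton V) _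

end MUNAux3
section MUNAux4

set_option linter.unusedSectionVars false
set_option linter.unusedVariables false

variable {X : Type*} [MetricSpace X] {T : X → X} {f : X → ℝ} {𝒰 : Finset (Set X)} {s : ℝ} {N : ℕ}

lemma MUN_le_nodeCost {Λ : Set (Σ n : ℕ, Fin n → Set X)} {Z : Set X} (hc : Λ.Countable)
    (hv : ∀ V ∈ Λ, N ≤ V.1 ∧ ∀ j, V.2 j ∈ 𝒰) (hcov : Z ⊆ ⋃ V ∈ Λ, cylinder T V) :
    MUN T f 𝒰 s N Z ≤ nodeCost T f s Λ := by
  rw [← tsum_subtype_eq_nodeCost]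
  exact iInf_le_of_le Λ (iInf_le_of_le ⟨hc, hv, hcov⟩ le_rfl)

lemma MUN_mono {Z Z' : Set X} (h : Z ⊆ Z') : MUN T f 𝒰 s N Z ≤ MUN T f 𝒰 s N Z' := by
  refine le_iInf₂ fun Λ hΛ => ?_
  exact iInf_le_of_le Λ (iInf_le_of_le ⟨hΛ.1, hΛ.2.1, h.trans hΛ.2.2⟩ le_rfl)

lemma MUN_le_cylWeight {V : Σ n : ℕ, Fin n → Set X} (hV : N ≤ V.1 ∧ ∀ j, V.2 j ∈ 𝒰)
    {Z : Set X} : MUN T f 𝒰 s N (Z ∩ cylinder T V) ≤ cylWeight T f s V := by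
  rw [← nodeCost_singleton T f s V]
  refine MUN_le_nodeCost (Set.countable_singleton V) (by simpa using hV) ?_
  intro x hx
  exact Set.mem_biUnion rfl hx.2

/-- Existence of a near-optimal cover consisting of nonempty cylinders. -/
lemma exists_good_cover {Z : Set X} (h : MUN T f 𝒰 s N Z ≠ ⊤) {δ : ℝ≥0∞} (hδ : δ ≠ 0) :
    ∃ Λ : Set (Σ n : ℕ, Fin n → Set X), Λ.Countable ∧ (∀ V ∈ Λ, N ≤ V.1 ∧ ∀ j, V.2 j ∈ 𝒰) ∧
      (Z ⊆ ⋃ V ∈ Λ, cylinder T V) ∧ (∀ V ∈ Λ, (cylinder T V).Nonempty) ∧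
      nodeCost T f s Λ ≤ MUN T f 𝒰 s N Z + δ := by
  have hlt : MUN T f 𝒰 s N Z < MUN T f 𝒰 s N Z + δ := ENNReal.lt_add_right h hδ
  conv_lhs at hlt => rw [MUN]
  rw [iInf_lt_iff] at hlt
  obtain ⟨Λ, hlt⟩ := hlt
  rw [iInf_lt_iff] at hlt
  obtain ⟨⟨hc, hv, hcov⟩, hlt⟩ := hlt
  refine ⟨{U ∈ Λ | (cylinder T U).Nonempty}, hc.mono (Set.sep_subset _ _),
    fun V hV => hv V hV.1, ?_, fun V hV => hV.2, ?_⟩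
  · intro x hx
    obtain ⟨V, hV, hxV⟩ := Set.mem_iUnion₂.1 (hcov hx)
    exact Set.mem_biUnion ⟨hV, ⟨x, hxV⟩⟩ hxV
  · refine le_trans (nodeCost_mono (Set.sep_subset _ _)) ?_
    rw [← tsum_subtype_eq_nodeCost]
    exact hlt.le

lemma MUN_splice {Γ : Set (Σ n : ℕ, Fin n → Set X)} {Z : Set X} (hc : Γ.Countable)
    (hcov : Z ⊆ ⋃ V ∈ Γ, cylinder T V) :
    MUN T f 𝒰 s N Z ≤ ∑' V : Γ, MUN T f 𝒰 s N (Z ∩ cylinder T V) := by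
  haveI := hc.to_subtype
  refine ENNReal.le_of_forall_pos_le_add fun ε hε htop => ?_
  obtain ⟨δ, hδpos, hδsum⟩ := ENNReal.exists_pos_sum_of_countable
    (ENNReal.coe_ne_zero.2 hε.ne') ↥Γ
  have hne : ∀ V : Γ, MUN T f 𝒰 s N (Z ∩ cylinder T (V : Σ n : ℕ, Fin n → Set X)) ≠ ⊤ :=
    fun V => ((ENNReal.le_tsum V).trans_lt htop).ne
  choose Λs hΛc hΛv hΛcov hΛne hΛcost using fun V : Γ =>
    exists_good_cover (T := T) (f := f) (𝒰 := 𝒰) (s := s) (N := N) (hne V)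
      (ENNReal.coe_ne_zero.2 (hδpos V).ne')
  have hcov' : Z ⊆ ⋃ W ∈ ⋃ V : Γ, Λs V, cylinder T W := by
    intro x hx
    obtain ⟨V, hV, hxV⟩ := Set.mem_iUnion₂.1 (hcov hx)
    obtain ⟨W, hW, hxW⟩ := Set.mem_iUnion₂.1 (hΛcov ⟨V, hV⟩ ⟨hx, hxV⟩)
    exact Set.mem_biUnion (Set.mem_iUnion.2 ⟨⟨V, hV⟩, hW⟩) hxW
  calc MUN T f 𝒰 s N Z ≤ nodeCost T f s (⋃ V : Γ, Λs V) :=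
        MUN_le_nodeCost (Set.countable_iUnion hΛc)
          (fun W hW => by obtain ⟨V, hV⟩ := Set.mem_iUnion.1 hW; exact hΛv V W hV) hcov'
    _ ≤ ∑' V : Γ, nodeCost T f s (Λs V) := nodeCost_iUnion_le T f s Λs
    _ ≤ ∑' V : Γ, (MUN T f 𝒰 s N (Z ∩ cylinder T V) + δ V) :=
        Summable.tsum_le_tsum (fun V => hΛcost V) ENNReal.summable ENNReal.summable
    _ = (∑' V : Γ, MUN T f 𝒰 s N (Z ∩ cylinder T V)) + ∑' V : Γ, (δ V : ℝ≥0∞) :=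
        ENNReal.tsum_add
    _ ≤ (∑' V : Γ, MUN T f 𝒰 s N (Z ∩ cylinder T V)) + ε :=
        add_le_add le_rfl hδsum.le

end MUNAux4
section MUNAux5

set_option linter.unusedSectionVars false
set_option linter.unusedVariables false

variable {X : Type*} [MetricSpace X]

abbrev SNode (X : Type*) := Σ n : ℕ, Fin n → Set X

def NodeAntichain (Γ : Set (SNode X)) : Prop :=
  ∀ U ∈ Γ, ∀ V ∈ Γ, NodePre U V → U = V

lemma exists_min_pre {Γ : Set (SNode X)} {U : SNode X} (h : ∃ V ∈ Γ, NodePre V U) :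
    ∃ V, (V ∈ Γ ∧ NodePre V U) ∧ ∀ W ∈ Γ, NodePre W U → V.1 ≤ W.1 := by
  classical
  set S : Set ℕ := {n | ∃ V, (V ∈ Γ ∧ NodePre V U) ∧ V.1 = n} with hS
  have hSne : S.Nonempty := by
    obtain ⟨V, hV, hpre⟩ := h
    exact ⟨V.1, V, ⟨hV, hpre⟩, rfl⟩
  obtain ⟨V, hV, hVn⟩ := Nat.sInf_mem hSne
  refine ⟨V, hV, fun W hW hpre => ?_⟩
  rw [hVn]
  exact Nat.sInf_le ⟨W, ⟨hW, hpre⟩, rfl⟩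

noncomputable def nodeAnc (Γ : Set (SNode X)) (U : SNode X) : SNode X := by
  classical
  exact if h : ∃ V, (V ∈ Γ ∧ NodePre V U) ∧ ∀ W ∈ Γ, NodePre W U → V.1 ≤ W.1
    then h.choose else U

lemma nodeAnc_spec {Γ : Set (SNode X)} {U : SNode X} (h : ∃ V ∈ Γ, NodePre V U) :
    nodeAnc Γ U ∈ Γ ∧ NodePre (nodeAnc Γ U) U ∧
      ∀ W ∈ Γ, NodePre W U → (nodeAnc Γ U).1 ≤ W.1 := by
  classical
  have h' := exists_min_pre h
  rw [nodeAnc]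
  simp only [dif_pos h']
  exact ⟨h'.choose_spec.1.1, h'.choose_spec.1.2, h'.choose_spec.2⟩

lemma nodeAnc_of_not {Γ : Set (SNode X)} {U : SNode X} (h : ¬ ∃ V ∈ Γ, NodePre V U) :
    nodeAnc Γ U = U := by
  classical
  rw [nodeAnc]
  rw [dif_neg]
  intro ⟨V, ⟨hV, hpre⟩, _⟩
  exact h ⟨V, hV, hpre⟩

lemma nodeAnc_pre (Γ : Set (SNode X)) (U : SNode X) : NodePre (nodeAnc Γ U) U := by
  by_cases h : ∃ V ∈ Γ, NodePre V U
  · exact (nodeAnc_spec h).2.1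
  · rw [nodeAnc_of_not h]; exact nodePre_rfl U

lemma nodeAnc_eq {Γ : Set (SNode X)} (hΓ : NodeAntichain Γ) {V U : SNode X} (hV : V ∈ Γ)
    (hpre : NodePre V U) : nodeAnc Γ U = V := by
  have h : ∃ V ∈ Γ, NodePre V U := ⟨V, hV, hpre⟩
  obtain ⟨hmem, hp, hmin⟩ := nodeAnc_spec h
  exact hΓ _ hmem _ hV (nodePre_of_common hp hpre (hmin V hV hpre))

def reduceN (Γ' : Set (SNode X)) : Set (SNode X) :=
  {U ∈ Γ' | ∀ V ∈ Γ', NodePre V U → V = U}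

lemma reduceN_subset (Γ' : Set (SNode X)) : reduceN Γ' ⊆ Γ' := Set.sep_subset _ _

lemma reduceN_antichain (Γ' : Set (SNode X)) : NodeAntichain (reduceN Γ') :=
  fun U hU V hV hpre => hV.2 U hU.1 hpre

lemma exists_reduceN {Γ' : Set (SNode X)} : ∀ U ∈ Γ', ∃ W ∈ reduceN Γ', NodePre W U := by
  have key : ∀ n : ℕ, ∀ U ∈ Γ', U.1 ≤ n → ∃ W ∈ reduceN Γ', NodePre W U := by
    intro n
    induction n with
    | zero =>
      intro U hU hn
      by_cases h : U ∈ reduceN Γ'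
      · exact ⟨U, h, nodePre_rfl U⟩
      · exfalso
        simp only [reduceN, Set.mem_sep_iff, hU, true_and, not_forall] at h
        obtain ⟨V, hV, hpre, hne⟩ := h
        exact hne (nodePre_antisymm_len hpre (by omega : U.1 ≤ V.1))
    | succ n ih =>
      intro U hU hn
      by_cases h : U ∈ reduceN Γ'
      · exact ⟨U, h, nodePre_rfl U⟩
      · simp only [reduceN, Set.mem_sep_iff, hU, true_and, not_forall] at h
        obtain ⟨V, hV, hpre, hne⟩ := h
        have hlt : V.1 < U.1 := by
          rcases lt_or_ge V.1 U.1 with h' | h'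
          · exact h'
          · exact absurd (nodePre_antisymm_len hpre h') hne
        obtain ⟨W, hW, hWpre⟩ := ih V hV (by omega)
        exact ⟨W, hW, nodePre_trans hWpre hpre⟩
  exact fun U hU => key U.1 U hU le_rfl

end MUNAux5
section MUNAux6

set_option linter.unusedSectionVars false
set_option linter.unusedVariables false

variable {X : Type*} [MetricSpace X]

lemma tsum_subtype_mono (g : SNode X → ℝ≥0∞) {A B : Set (SNode X)} (h : A ⊆ B) :
    ∑' x : A, g x ≤ ∑' x : B, g x := by
  rw [tsum_subtype, tsum_subtype]
  exact Summable.tsum_le_tsum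
    (fun U => Set.indicator_le_indicator_of_subset h (fun _ => zero_le) U)
    ENNReal.summable ENNReal.summable

lemma nodeCost_diff_add {T : X → X} {f : X → ℝ} {s : ℝ} {K Λ : Set (SNode X)} (h : K ⊆ Λ) :
    nodeCost T f s K + nodeCost T f s (Λ \ K) = nodeCost T f s Λ := by
  rw [nodeCost, nodeCost, nodeCost, ← ENNReal.tsum_add]
  refine tsum_congr fun U => ?_
  by_cases hK : U ∈ K
  · rw [Set.indicator_of_mem hK, Set.indicator_of_notMem (fun h' => h'.2 hK),
      Set.indicator_of_mem (h hK), add_zero]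
  by_cases hΛ : U ∈ Λ
  · rw [Set.indicator_of_notMem hK, Set.indicator_of_mem (show U ∈ Λ \ K from ⟨hΛ, hK⟩),
      Set.indicator_of_mem hΛ, zero_add]
  · rw [Set.indicator_of_notMem hK, Set.indicator_of_notMem (fun h' => hΛ h'.1),
      Set.indicator_of_notMem hΛ, add_zero]

/-- Sum of costs of pairwise disjoint subsets of `Λ'` is at most the cost of `Λ'`. -/
lemma tsum_nodeCost_packets_le {T : X → X} {f : X → ℝ} {s : ℝ} {R Λ' : Set (SNode X)}
    (P : SNode X → Set (SNode X)) (hsub : ∀ V ∈ R, P V ⊆ Λ')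
    (hdisj : ∀ V ∈ R, ∀ V' ∈ R, ∀ U, U ∈ P V → U ∈ P V' → V = V') :
    ∑' V : R, nodeCost T f s (P V) ≤ nodeCost T f s Λ' := by
  classical
  have h1 : ∀ U : SNode X, ∑' V : R, (P (V : SNode X)).indicator (cylWeight T f s) U ≤
      Λ'.indicator (cylWeight T f s) U := by
    intro U
    by_cases hU : ∃ V ∈ R, U ∈ P V
    · obtain ⟨V₀, hV₀, hUV₀⟩ := hU
      have : ∑' V : R, (P (V : SNode X)).indicator (cylWeight T f s) U
          = (P V₀).indicator (cylWeight T f s) U := by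
        refine tsum_eq_single (⟨V₀, hV₀⟩ : R) fun W hW => ?_
        refine Set.indicator_of_notMem (fun hUW => hW ?_) _
        exact Subtype.ext (hdisj _ W.2 _ hV₀ U hUW hUV₀)
      rw [this, Set.indicator_of_mem hUV₀, Set.indicator_of_mem (hsub V₀ hV₀ hUV₀)]
    · push_neg at hU
      have : ∀ V : R, (P (V : SNode X)).indicator (cylWeight T f s) U = 0 :=
        fun V => Set.indicator_of_notMem (hU V V.2) _
      rw [tsum_congr this]
      simp
  calc ∑' V : R, nodeCost T f s (P V)
      = ∑' (U : SNode X) (V : R), (P (V : SNode X)).indicator (cylWeight T f s) U :=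
        ENNReal.tsum_comm
    _ ≤ ∑' U : SNode X, Λ'.indicator (cylWeight T f s) U :=
        Summable.tsum_le_tsum h1 ENNReal.summable ENNReal.summable
    _ = nodeCost T f s Λ' := rfl

end MUNAux6
section MUNAux7

set_option linter.unusedSectionVars false
set_option linter.unusedVariables false

variable {X : Type*} [MetricSpace X] {T : X → X} {f : X → ℝ} {𝒰 : Finset (Set X)} {s : ℝ} {N : ℕ}

lemma step_exists (h𝒰 : IsClopenPartition 𝒰) {Z₁ Z₂ : Set X} (hZ : Z₁ ⊆ Z₂)
    {Γ Λ : Set (SNode X)}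
    (hΓc : Γ.Countable) (hΓv : ∀ V ∈ Γ, N ≤ V.1 ∧ ∀ j, V.2 j ∈ 𝒰)
    (hΓne : ∀ V ∈ Γ, (cylinder T V).Nonempty) (hΓa : NodeAntichain Γ)
    (hΛc : Λ.Countable) (hΛv : ∀ V ∈ Λ, N ≤ V.1 ∧ ∀ j, V.2 j ∈ 𝒰)
    (hΛne : ∀ V ∈ Λ, (cylinder T V).Nonempty) (hΛcov : Z₂ ⊆ ⋃ V ∈ Λ, cylinder T V) :
    ∃ Γ₂ : Set (SNode X), Γ₂.Countable ∧ (∀ V ∈ Γ₂, N ≤ V.1 ∧ ∀ j, V.2 j ∈ 𝒰) ∧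
      (∀ V ∈ Γ₂, (cylinder T V).Nonempty) ∧ NodeAntichain Γ₂ ∧
      (Z₂ ⊆ ⋃ V ∈ Γ₂, cylinder T V) ∧
      (∀ x ∈ Z₁, ∃ W ∈ Γ₂, x ∈ cylinder T W ∧ ∀ V ∈ Γ, x ∈ cylinder T V → W.1 ≤ V.1) ∧
      nodeCost T f s Γ₂ ≤ nodeCost T f s Λ +
        ∑' V : Γ, (cylWeight T f s V - MUN T f 𝒰 s N (Z₁ ∩ cylinder T (V : SNode X))) := by
  classical
  set Γ' : Set (SNode X) := nodeAnc Γ '' Λ with hΓ'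
  set Γ₂ : Set (SNode X) := reduceN Γ' with hΓ₂
  -- basic membership facts
  have hmem : ∀ W ∈ Γ', W ∈ Γ ∨ W ∈ Λ := by
    rintro W ⟨U, hU, rfl⟩
    by_cases hex : ∃ V ∈ Γ, NodePre V U
    · exact Or.inl (nodeAnc_spec hex).1
    · rw [nodeAnc_of_not hex]; exact Or.inr hU
  have hΓ₂sub : Γ₂ ⊆ Γ' := reduceN_subset Γ'
  have hΓ₂v : ∀ V ∈ Γ₂, N ≤ V.1 ∧ ∀ j, V.2 j ∈ 𝒰 := by
    intro V hV
    rcases hmem V (hΓ₂sub hV) with h | h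
    · exact hΓv V h
    · exact hΛv V h
  have hΓ₂ne : ∀ V ∈ Γ₂, (cylinder T V).Nonempty := by
    intro V hV
    rcases hmem V (hΓ₂sub hV) with h | h
    · exact hΓne V h
    · exact hΛne V h
  have hΓ₂c : Γ₂.Countable := (hΛc.image _).mono hΓ₂sub
  -- covering of Z₂
  have hΓ₂cov : Z₂ ⊆ ⋃ V ∈ Γ₂, cylinder T V := by
    intro x hx
    obtain ⟨U, hU, hxU⟩ := Set.mem_iUnion₂.1 (hΛcov hx)
    have hA : nodeAnc Γ U ∈ Γ' := ⟨U, hU, rfl⟩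
    obtain ⟨W, hW, hWpre⟩ := exists_reduceN _ hA
    refine Set.mem_biUnion hW ?_
    exact cylinder_anti (nodePre_trans hWpre (nodeAnc_pre Γ U)) hxU
  -- depth property
  have hdepth : ∀ x ∈ Z₁, ∃ W ∈ Γ₂, x ∈ cylinder T W ∧
      ∀ V ∈ Γ, x ∈ cylinder T V → W.1 ≤ V.1 := by
    intro x hx
    obtain ⟨U, hU, hxU⟩ := Set.mem_iUnion₂.1 (hΛcov (hZ hx))
    have hA : nodeAnc Γ U ∈ Γ' := ⟨U, hU, rfl⟩
    obtain ⟨W, hW, hWpre⟩ := exists_reduceN _ hA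
    have hpreAU := nodeAnc_pre Γ U
    refine ⟨W, hW, cylinder_anti (nodePre_trans hWpre hpreAU) hxU, ?_⟩
    intro V hV hxV
    have hWA : W.1 ≤ (nodeAnc Γ U).1 := hWpre.1
    rcases le_total V.1 U.1 with hc | hc
    · -- V is a prefix of U, so anc minimality applies
      have hVU : NodePre V U := nodePre_of_mem h𝒰 (hΓv V hV).2 (hΛv U hU).2 hxV hxU hc
      exact le_trans hWA ((nodeAnc_spec ⟨V, hV, hVU⟩).2.2 V hV hVU)
    · exact le_trans hWA (le_trans hpreAU.1 hc)
  -- cost estimate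
  set kept : Set (SNode X) := {U ∈ Λ | ¬ ∃ V ∈ Γ, NodePre V U} with hkept
  set R : Set (SNode X) := Γ₂ ∩ Γ with hR
  set P : SNode X → Set (SNode X) :=
    fun V => {U ∈ Λ | (∃ W ∈ Γ, NodePre W U) ∧ nodeAnc Γ U = V} with hP
  have hsplit : Γ₂ ⊆ (Γ₂ ∩ kept) ∪ R := by
    intro W hW
    obtain ⟨U, hU, hUW⟩ := hΓ₂sub hW
    by_cases hex : ∃ V ∈ Γ, NodePre V U
    · exact Or.inr ⟨hW, hUW ▸ (nodeAnc_spec hex).1⟩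
    · refine Or.inl ⟨hW, ?_⟩
      rw [← hUW, nodeAnc_of_not hex]
      exact ⟨hU, hex⟩
  -- packets cover
  have hpacket_cov : ∀ V ∈ R, Z₁ ∩ cylinder T V ⊆ ⋃ U ∈ P V, cylinder T U := by
    rintro V ⟨hVΓ₂, hVΓ⟩ x ⟨hxZ, hxV⟩
    obtain ⟨U, hU, hxU⟩ := Set.mem_iUnion₂.1 (hΛcov (hZ hxZ))
    rcases le_total V.1 U.1 with hc | hc
    · have hVU : NodePre V U := nodePre_of_mem h𝒰 (hΓv V hVΓ).2 (hΛv U hU).2 hxV hxU hc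
      exact Set.mem_biUnion ⟨hU, ⟨V, hVΓ, hVU⟩, nodeAnc_eq hΓa hVΓ hVU⟩ hxU
    · have hUV : NodePre U V := nodePre_of_mem h𝒰 (hΛv U hU).2 (hΓv V hVΓ).2 hxU hxV hc
      by_cases heq : U = V
      · subst heq
        exact Set.mem_biUnion ⟨hU, ⟨U, hVΓ, nodePre_rfl U⟩,
          nodeAnc_eq hΓa hVΓ (nodePre_rfl U)⟩ hxU
      · exfalso
        have hlt : U.1 < V.1 := by
          rcases lt_or_ge U.1 V.1 with h' | h'
          · exact h'
          · exact absurd (nodePre_antisymm_len hUV h') heq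
        have hAV : NodePre (nodeAnc Γ U) V := nodePre_trans (nodeAnc_pre Γ U) hUV
        have hAne : nodeAnc Γ U ≠ V := by
          intro h'
          have hle : (nodeAnc Γ U).1 ≤ U.1 := (nodeAnc_pre Γ U).1
          rw [h'] at hle
          omega
        exact hAne (hVΓ₂.2 (nodeAnc Γ U) ⟨U, hU, rfl⟩ hAV)
  have hcost : nodeCost T f s Γ₂ ≤ nodeCost T f s Λ +
      ∑' V : Γ, (cylWeight T f s V - MUN T f 𝒰 s N (Z₁ ∩ cylinder T (V : SNode X))) := by
    have h1 : nodeCost T f s Γ₂ ≤ nodeCost T f s kept + nodeCost T f s R :=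
      le_trans (nodeCost_mono hsplit) (le_trans (nodeCost_union_le T f s _ _)
        (add_le_add (nodeCost_mono (Set.inter_subset_right)) le_rfl))
    have h2 : nodeCost T f s R =
        (∑' V : R, MUN T f 𝒰 s N (Z₁ ∩ cylinder T (V : SNode X))) +
        ∑' V : R, (cylWeight T f s (V : SNode X) -
          MUN T f 𝒰 s N (Z₁ ∩ cylinder T (V : SNode X))) := by
      rw [← ENNReal.tsum_add, ← tsum_subtype_eq_nodeCost]
      refine tsum_congr fun V => ?_
      exact (add_tsub_cancel_of_le (MUN_le_cylWeight (hΓv V V.2.2))).symm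
    have h3 : (∑' V : R, MUN T f 𝒰 s N (Z₁ ∩ cylinder T (V : SNode X))) ≤
        nodeCost T f s (Λ \ kept) := by
      refine le_trans (Summable.tsum_le_tsum (fun V => ?_) ENNReal.summable ENNReal.summable)
        (tsum_nodeCost_packets_le P (fun V hV U hU => ⟨hU.1, fun hk => hk.2 hU.2.1⟩)
          (fun V hV V' hV' U hU hU' => hU.2.2.symm.trans hU'.2.2))
      exact MUN_le_nodeCost (hΛc.mono (Set.sep_subset _ _))
        (fun U hU => hΛv U hU.1) (hpacket_cov V V.2)
    have h4 : ∑' V : R, (cylWeight T f s (V : SNode X) -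
          MUN T f 𝒰 s N (Z₁ ∩ cylinder T (V : SNode X))) ≤
        ∑' V : Γ, (cylWeight T f s (V : SNode X) -
          MUN T f 𝒰 s N (Z₁ ∩ cylinder T (V : SNode X))) :=
      tsum_subtype_mono (fun V => cylWeight T f s V - MUN T f 𝒰 s N (Z₁ ∩ cylinder T V))
        (show R ⊆ Γ from Set.inter_subset_right)
    calc nodeCost T f s Γ₂ ≤ nodeCost T f s kept + nodeCost T f s R := h1
      _ ≤ nodeCost T f s kept + (nodeCost T f s (Λ \ kept) +
          ∑' V : Γ, (cylWeight T f s (V : SNode X) -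
            MUN T f 𝒰 s N (Z₁ ∩ cylinder T (V : SNode X)))) := by
          rw [h2]; exact add_le_add le_rfl (add_le_add h3 h4)
      _ = (nodeCost T f s kept + nodeCost T f s (Λ \ kept)) +
          ∑' V : Γ, (cylWeight T f s (V : SNode X) -
            MUN T f 𝒰 s N (Z₁ ∩ cylinder T (V : SNode X))) := by rw [add_assoc]
      _ = _ := by rw [nodeCost_diff_add (Set.sep_subset _ _)]
  exact ⟨Γ₂, hΓ₂c, hΓ₂v, hΓ₂ne, reduceN_antichain Γ', hΓ₂cov, hdepth, hcost⟩

end MUNAux7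
section MUNAux8

set_option linter.unusedSectionVars false
set_option linter.unusedVariables false
set_option maxHeartbeats 1000000

variable {X : Type*} [MetricSpace X]

/-- A good near-optimal antichain cover. -/
def GoodCover (T : X → X) (f : X → ℝ) (𝒰 : Finset (Set X)) (s : ℝ) (N : ℕ)
    (Z : Set X) (η : ℝ≥0∞) (Γ : Set (SNode X)) : Prop :=
  Γ.Countable ∧ (∀ V ∈ Γ, N ≤ V.1 ∧ ∀ j, V.2 j ∈ 𝒰) ∧
    (∀ V ∈ Γ, (cylinder T V).Nonempty) ∧ NodeAntichain Γ ∧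
    (Z ⊆ ⋃ V ∈ Γ, cylinder T V) ∧
    nodeCost T f s Γ ≤ MUN T f 𝒰 s N Z + η

variable {T : X → X} {f : X → ℝ} {𝒰 : Finset (Set X)} {s : ℝ} {N : ℕ}

lemma sigma_le {Γ : Set (SNode X)} {Z : Set X} {η : ℝ≥0∞} (hc : Γ.Countable)
    (hv : ∀ V ∈ Γ, N ≤ V.1 ∧ ∀ j, V.2 j ∈ 𝒰) (hcov : Z ⊆ ⋃ V ∈ Γ, cylinder T V)
    (hne : MUN T f 𝒰 s N Z ≠ ⊤) (hcost : nodeCost T f s Γ ≤ MUN T f 𝒰 s N Z + η) :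
    ∑' V : Γ, (cylWeight T f s V - MUN T f 𝒰 s N (Z ∩ cylinder T (V : SNode X))) ≤ η := by
  have h1 : nodeCost T f s Γ =
      (∑' V : Γ, MUN T f 𝒰 s N (Z ∩ cylinder T (V : SNode X))) +
      ∑' V : Γ, (cylWeight T f s (V : SNode X) -
        MUN T f 𝒰 s N (Z ∩ cylinder T (V : SNode X))) := by
    rw [← ENNReal.tsum_add, ← tsum_subtype_eq_nodeCost]
    refine tsum_congr fun V => ?_
    exact (add_tsub_cancel_of_le (MUN_le_cylWeight (hv V V.2))).symm
  have h2 : MUN T f 𝒰 s N Z +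
      (∑' V : Γ, (cylWeight T f s (V : SNode X) -
        MUN T f 𝒰 s N (Z ∩ cylinder T (V : SNode X)))) ≤ MUN T f 𝒰 s N Z + η := by
    refine le_trans ?_ hcost
    rw [h1]
    exact add_le_add (MUN_splice hc hcov) le_rfl
  exact (ENNReal.add_le_add_iff_left hne).1 h2

lemma reduceN_cover {Λ : Set (SNode X)} {Z : Set X} (hcov : Z ⊆ ⋃ V ∈ Λ, cylinder T V) :
    Z ⊆ ⋃ V ∈ reduceN Λ, cylinder T V := by
  intro x hx
  obtain ⟨U, hU, hxU⟩ := Set.mem_iUnion₂.1 (hcov hx)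
  obtain ⟨W, hW, hWpre⟩ := exists_reduceN U hU
  exact Set.mem_biUnion hW (cylinder_anti hWpre hxU)

lemma base_good {Z : Set X} {δ : ℝ≥0∞} (hne : MUN T f 𝒰 s N Z ≠ ⊤) (hδ : δ ≠ 0) :
    ∃ Γ, GoodCover T f 𝒰 s N Z δ Γ := by
  obtain ⟨Λ, hc, hv, hcov, hcylne, hcost⟩ := exists_good_cover (T := T) (f := f) (𝒰 := 𝒰)
    (s := s) (N := N) (Z := Z) hne hδ
  exact ⟨reduceN Λ, hc.mono (reduceN_subset Λ), fun V hV => hv V (reduceN_subset Λ hV),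
    fun V hV => hcylne V (reduceN_subset Λ hV), reduceN_antichain Λ, reduceN_cover hcov,
    le_trans (nodeCost_mono (reduceN_subset Λ)) hcost⟩

lemma step_good (h𝒰 : IsClopenPartition 𝒰) {Z₁ Z₂ : Set X} {η₁ δ₂ : ℝ≥0∞} (hZ : Z₁ ⊆ Z₂)
    (hne₁ : MUN T f 𝒰 s N Z₁ ≠ ⊤) (hne₂ : MUN T f 𝒰 s N Z₂ ≠ ⊤) (hδ : δ₂ ≠ 0)
    {Γ : Set (SNode X)} (hΓ : GoodCover T f 𝒰 s N Z₁ η₁ Γ) :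
    ∃ Γ₂, GoodCover T f 𝒰 s N Z₂ (η₁ + δ₂) Γ₂ ∧
      ∀ x ∈ Z₁, ∃ W ∈ Γ₂, x ∈ cylinder T W ∧ ∀ V ∈ Γ, x ∈ cylinder T V → W.1 ≤ V.1 := by
  obtain ⟨hc, hv, hcylne, ha, hcov, hcost⟩ := hΓ
  have hσ := sigma_le hc hv hcov hne₁ hcost
  obtain ⟨Λ, hΛc, hΛv, hΛcov, hΛne, hΛcost⟩ := exists_good_cover (T := T) (f := f) (𝒰 := 𝒰)
    (s := s) (N := N) (Z := Z₂) hne₂ hδ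
  obtain ⟨Γ₂, h1, h2, h3, h4, h5, h6, h7⟩ :=
    step_exists h𝒰 hZ hc hv hcylne ha hΛc hΛv hΛne hΛcov
  refine ⟨Γ₂, ⟨h1, h2, h3, h4, h5, ?_⟩, h6⟩
  calc nodeCost T f s Γ₂ ≤ nodeCost T f s Λ +
        ∑' V : Γ, (cylWeight T f s V - MUN T f 𝒰 s N (Z₁ ∩ cylinder T (V : SNode X))) := h7
    _ ≤ (MUN T f 𝒰 s N Z₂ + δ₂) + η₁ := add_le_add hΛcost hσ
    _ = MUN T f 𝒰 s N Z₂ + (η₁ + δ₂) := by rw [add_assoc, add_comm δ₂ η₁]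

lemma MUN_iUnion_le (h𝒰 : IsClopenPartition 𝒰) (E : ℕ → Set X)
    (hmono : ∀ i, E i ⊆ E (i + 1)) (hL : (⨆ i, MUN T f 𝒰 s N (E i)) ≠ ⊤) :
    MUN T f 𝒰 s N (⋃ i, E i) ≤ ⨆ i, MUN T f 𝒰 s N (E i) := by
  classical
  have hE : ∀ {i j : ℕ}, i ≤ j → E i ⊆ E j := fun {i j} hij =>
    monotone_nat_of_le_succ (fun n => hmono n) hij
  have hMle : ∀ i, MUN T f 𝒰 s N (E i) ≤ ⨆ i, MUN T f 𝒰 s N (E i) := fun i =>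
    le_iSup (fun i => MUN T f 𝒰 s N (E i)) i
  have hMne : ∀ i, MUN T f 𝒰 s N (E i) ≠ ⊤ := fun i =>
    ((hMle i).trans_lt (lt_top_iff_ne_top.2 hL)).ne
  refine ENNReal.le_of_forall_pos_le_add fun ε hε htop => ?_
  obtain ⟨δ, hδpos, hδsum⟩ := ENNReal.exists_pos_sum_of_countable
    (ENNReal.coe_ne_zero.2 hε.ne') ℕ
  have hδne : ∀ i, (δ i : ℝ≥0∞) ≠ 0 := fun i => ENNReal.coe_ne_zero.2 (hδpos i).ne'
  set η : ℕ → ℝ≥0∞ := fun i => ∑ j ∈ Finset.range (i + 1), (δ j : ℝ≥0∞) with hηdef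
  have hηle : ∀ i, η i ≤ ε := fun i => le_trans (ENNReal.sum_le_tsum _) hδsum.le
  -- construct the recursive sequence of good covers
  have hstep : ∀ i (Γ : Set (SNode X)), GoodCover T f 𝒰 s N (E i) (η i) Γ →
      ∃ Γ₂, GoodCover T f 𝒰 s N (E (i + 1)) (η (i + 1)) Γ₂ ∧
        ∀ x ∈ E i, ∃ W ∈ Γ₂, x ∈ cylinder T W ∧ ∀ V ∈ Γ, x ∈ cylinder T V → W.1 ≤ V.1 := by
    intro i Γ hΓ
    have h := step_good h𝒰 (hmono i) (hMne i) (hMne (i + 1)) (hδne (i + 1)) hΓ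
    rwa [show η i + (δ (i + 1) : ℝ≥0∞) = η (i + 1) from (Finset.sum_range_succ _ _).symm] at h
  have hbase : ∃ Γ, GoodCover T f 𝒰 s N (E 0) (η 0) Γ := by
    have h := base_good (T := T) (f := f) (𝒰 := 𝒰) (s := s) (N := N) (Z := E 0)
      (hMne 0) (hδne 0)
    rwa [show (δ 0 : ℝ≥0∞) = η 0 by simp [hηdef]] at h
  let Gseq : ∀ i : ℕ, {Γ : Set (SNode X) // GoodCover T f 𝒰 s N (E i) (η i) Γ} := fun i =>
    Nat.rec ⟨hbase.choose, hbase.choose_spec⟩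
      (fun i p => ⟨(hstep i p.1 p.2).choose, (hstep i p.1 p.2).choose_spec.1⟩) i
  have hGood : ∀ i, GoodCover T f 𝒰 s N (E i) (η i) (Gseq i).1 := fun i => (Gseq i).2
  have hlink : ∀ i, ∀ x ∈ E i, ∃ W ∈ (Gseq (i + 1)).1, x ∈ cylinder T W ∧
      ∀ V ∈ (Gseq i).1, x ∈ cylinder T V → W.1 ≤ V.1 :=
    fun i => (hstep i (Gseq i).1 (Gseq i).2).choose_spec.2
  -- the limit cover
  set Λinf : Set (SNode X) := {U | ∃ I, ∀ i, I ≤ i → U ∈ (Gseq i).1} with hΛinf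
  have hsubU : Λinf ⊆ ⋃ i, (Gseq i).1 := fun U hU =>
    Set.mem_iUnion.2 ⟨hU.choose, hU.choose_spec hU.choose le_rfl⟩
  have hΛinfc : Λinf.Countable :=
    (Set.countable_iUnion (fun i => (hGood i).1)).mono hsubU
  have hΛinfv : ∀ V ∈ Λinf, N ≤ V.1 ∧ ∀ j, V.2 j ∈ 𝒰 := by
    intro V hV
    obtain ⟨i, hi⟩ := Set.mem_iUnion.1 (hsubU hV)
    exact (hGood i).2.1 V hi
  have hΛinfcov : (⋃ i, E i) ⊆ ⋃ V ∈ Λinf, cylinder T V := by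
    intro x hx
    obtain ⟨i₀, hxi₀⟩ := Set.mem_iUnion.1 hx
    set A : ℕ → Set ℕ := fun i => {n | ∃ U ∈ (Gseq i).1, x ∈ cylinder T U ∧ U.1 = n} with hA
    have hAne : ∀ i, i₀ ≤ i → (A i).Nonempty := by
      intro i hi
      obtain ⟨U, hU, hxU⟩ := Set.mem_iUnion₂.1 ((hGood i).2.2.2.2.1 (hE hi hxi₀))
      exact ⟨U.1, U, hU, hxU, rfl⟩
    have hdec : ∀ i, i₀ ≤ i → sInf (A (i + 1)) ≤ sInf (A i) := by
      intro i hi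
      obtain ⟨U, hU, hxU, hU1⟩ := Nat.sInf_mem (hAne i hi)
      obtain ⟨W, hW, hxW, hWmin⟩ := hlink i x (hE hi hxi₀)
      exact le_trans (Nat.sInf_le ⟨W, hW, hxW, rfl⟩) (hU1 ▸ hWmin U hU hxU)
    set g : ℕ → ℕ := fun k => sInf (A (i₀ + k)) with hg
    have hganti : Antitone g := by
      refine antitone_nat_of_succ_le fun k => ?_
      exact hdec (i₀ + k) (Nat.le_add_right _ _)
    obtain ⟨k₁, hk₁⟩ := Nat.sInf_mem (Set.range_nonempty g)
    have hconst : ∀ k, k₁ ≤ k → g k = g k₁ := fun k hk =>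
      le_antisymm (hk₁ ▸ hganti hk) (hk₁ ▸ Nat.sInf_le (Set.mem_range_self k))
    have hmemi : ∀ i, i₀ + k₁ ≤ i → itin T 𝒰 x (g k₁) ∈ (Gseq i).1 := by
      intro i hi
      have hii₀ : i₀ ≤ i := le_trans (Nat.le_add_right _ _) hi
      have hgi : sInf (A i) = g k₁ := by
        have h' : i = i₀ + (k₁ + (i - (i₀ + k₁))) := by omega
        rw [h']
        exact hconst _ (Nat.le_add_right _ _)
      obtain ⟨U, hU, hxU, hU1⟩ := Nat.sInf_mem (hAne i hii₀)
      have hUeq : U = itin T 𝒰 x (g k₁) := by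
        rw [eq_itin h𝒰 ((hGood i).2.1 U hU).2 hxU, hU1, hgi]
      rw [← hUeq]
      exact hU
    refine Set.mem_biUnion (⟨i₀ + k₁, hmemi⟩ : itin T 𝒰 x (g k₁) ∈ Λinf) ?_
    exact mem_cyl_itin h𝒰.2.1 x (g k₁)
  -- cost of the limit cover
  have hcostI : ∀ i, nodeCost T f s (Gseq i).1 ≤ (⨆ i, MUN T f 𝒰 s N (E i)) + ε := fun i =>
    le_trans (hGood i).2.2.2.2.2 (add_le_add (hMle i) (hηle i))
  have hIfun : ∀ U, U ∈ Λinf → ∀ i, (if h : U ∈ Λinf then h.choose else 0) ≤ i →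
      U ∈ (Gseq i).1 := by
    intro U hU i hi
    rw [dif_pos hU] at hi
    exact hU.choose_spec i hi
  have hcostinf : nodeCost T f s Λinf ≤ (⨆ i, MUN T f 𝒰 s N (E i)) + ε := by
    rw [nodeCost, ENNReal.tsum_eq_iSup_sum]
    refine iSup_le fun F => ?_
    set F' := F.filter (fun U => U ∈ Λinf) with hF'
    have hsum : ∑ U ∈ F, Λinf.indicator (cylWeight T f s) U = ∑ U ∈ F', cylWeight T f s U := by
      rw [hF', Finset.sum_filter]
      refine Finset.sum_congr rfl fun U _ => ?_
      by_cases h : U ∈ Λinf <;> simp [Set.indicator_apply, h]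
    set Istar := F'.sup (fun U => if h : U ∈ Λinf then h.choose else 0) with hIstar
    have hsub : ↑F' ⊆ (Gseq Istar).1 := by
      intro U hU
      have hUmem : U ∈ F' := hU
      exact hIfun U (Finset.mem_filter.1 hUmem).2 Istar (Finset.le_sup (f := fun U => if h : U ∈ Λinf then h.choose else 0) hUmem)
    rw [hsum]
    exact le_trans (sum_le_nodeCost F' hsub) (hcostI Istar)
  exact le_trans (MUN_le_nodeCost hΛinfc hΛinfv hΛinfcov) hcostinf

end MUNAux8

/-- continuity of `M_N^s(𝒰,f,·)` along increasing sequences of sets,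
for a clopen partition `𝒰`. -/
theorem MUN_tendsto_of_monotone {X : Type*} [MetricSpace X] [CompactSpace X]
    {T : X → X} (hT : Continuous T) {f : X → ℝ} (hf : Continuous f)
    {𝒰 : Finset (Set X)} (h𝒰 : IsClopenPartition 𝒰) (s : ℝ) (N : ℕ)
    (E : ℕ → Set X) (hmono : ∀ i, E i ⊆ E (i + 1)) :
    Filter.Tendsto (fun i => MUN T f 𝒰 s N (E i)) Filter.atTop
      (nhds (MUN T f 𝒰 s N (⋃ i, E i))) := by
  have hE : ∀ {i j : ℕ}, i ≤ j → E i ⊆ E j := fun {i j} hij =>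
    monotone_nat_of_le_succ (fun n => hmono n) hij
  have hmonoM : Monotone (fun i => MUN T f 𝒰 s N (E i)) := fun i j hij => MUN_mono (hE hij)
  have hsup : MUN T f 𝒰 s N (⋃ i, E i) = ⨆ i, MUN T f 𝒰 s N (E i) := by
    refine le_antisymm ?_ (iSup_le fun i => MUN_mono (Set.subset_iUnion E i))
    by_cases h : (⨆ i, MUN T f 𝒰 s N (E i)) = ⊤
    · rw [h]; exact le_top
    · exact MUN_iUnion_le h𝒰 E hmono h
  rw [hsup]
  exact tendsto_atTop_iSup hmonoM
end

section
/- Let Φ : ℕ^ℕ → X be continuous, and for a sequence (n_p) of positive integers let Γ_{n_1,…,n_p} = {(m_1,m_2,…) ∈ ℕ^ℕ : m_j ≤ n_j for j ≤ p} and Z_{n_1,…,n_p} = Φ(Γ_{n_1,…,n_p}). Then ⋂_{p=1}^∞ closure(Z_{n_1,…,n_p}) = ⋂_{p=1}^∞ Z_{n_1,…,n_p}, and this set is a compact subset of Φ(ℕ^ℕ). -/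
open Set Filter
open scoped ENNReal

/-- Cantor diagonal argument: the intersection of the closures of the images
of the truncated Baire sets equals the intersection of the images themselves, and is a
compact subset of the range of `Φ`. -/
theorem iInter_closure_image_baire {X : Type*} [MetricSpace X] [CompactSpace X]
    {Φ : (ℕ → ℕ) → X} (hΦ : Continuous Φ) (n : ℕ → ℕ) :
    (⋂ p : ℕ, closure (Φ '' {m : ℕ → ℕ | ∀ j ≤ p, m j ≤ n j})) =
        (⋂ p : ℕ, Φ '' {m : ℕ → ℕ | ∀ j ≤ p, m j ≤ n j}) ∧
      IsCompact (⋂ p : ℕ, closure (Φ '' {m : ℕ → ℕ | ∀ j ≤ p, m j ≤ n j})) ∧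
      (⋂ p : ℕ, closure (Φ '' {m : ℕ → ℕ | ∀ j ≤ p, m j ≤ n j})) ⊆ Set.range Φ := by
  classical
  set K : Set (ℕ → ℕ) := Set.pi Set.univ (fun j => Set.Iic (n j)) with hKdef
  have hKcomp : IsCompact K := isCompact_univ_pi (fun j => (Set.finite_Iic (n j)).isCompact)
  have key : (⋂ p : ℕ, closure (Φ '' {m : ℕ → ℕ | ∀ j ≤ p, m j ≤ n j})) ⊆ Φ '' K := by
    intro x hx
    have hx' : ∀ p : ℕ, ∃ m : ℕ → ℕ, (∀ j ≤ p, m j ≤ n j) ∧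
        dist x (Φ m) < 1 / (p + 1) := by
      intro p
      have hxp : x ∈ closure (Φ '' {m : ℕ → ℕ | ∀ j ≤ p, m j ≤ n j}) :=
        Set.mem_iInter.1 hx p
      have hpos : (0 : ℝ) < 1 / (p + 1) := by positivity
      obtain ⟨y, hy, hdy⟩ := Metric.mem_closure_iff.1 hxp _ hpos
      obtain ⟨m, hm, rfl⟩ := hy
      exact ⟨m, hm, hdy⟩
    choose m hm hdist using hx'
    set u : ℕ → (ℕ → ℕ) := fun p j => if j ≤ p then m p j else 0 with hu
    have huK : ∀ p, u p ∈ K := by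
      intro p j _
      simp only [u]
      split
      · exact hm p j ‹_›
      · exact Nat.zero_le _
    obtain ⟨a, haK, φ, hφ, hconv⟩ := hKcomp.isSeqCompact huK
    have hmconv : Filter.Tendsto (fun k => m (φ k)) Filter.atTop (nhds a) := by
      rw [tendsto_pi_nhds]
      intro j
      have h1 := tendsto_pi_nhds.1 hconv j
      refine h1.congr' ?_
      filter_upwards [Filter.eventually_ge_atTop j] with k hk
      have : j ≤ φ k := hk.trans (hφ.id_le k)
      simp [u, this]
    have hΦconv : Filter.Tendsto (fun k => Φ (m (φ k))) Filter.atTop (nhds (Φ a)) :=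
      (hΦ.continuousAt.tendsto).comp hmconv
    have hΦx : Filter.Tendsto (fun k => Φ (m (φ k))) Filter.atTop (nhds x) := by
      rw [tendsto_iff_dist_tendsto_zero]
      have hb : Filter.Tendsto (fun k : ℕ => 1 / ((φ k : ℝ) + 1)) Filter.atTop (nhds 0) :=
        tendsto_one_div_add_atTop_nhds_zero_nat.comp (hφ.tendsto_atTop)
      refine squeeze_zero (fun k => dist_nonneg) (fun k => ?_) hb
      rw [dist_comm]
      exact le_of_lt (by exact_mod_cast hdist (φ k))
    have : Φ a = x := tendsto_nhds_unique hΦconv hΦx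
    exact ⟨a, haK, this⟩
  have hKsub : ∀ p : ℕ, K ⊆ {m : ℕ → ℕ | ∀ j ≤ p, m j ≤ n j} := by
    intro p m hmK j _
    exact hmK j (Set.mem_univ j)
  have himg : Φ '' K ⊆ ⋂ p : ℕ, Φ '' {m : ℕ → ℕ | ∀ j ≤ p, m j ≤ n j} :=
    Set.subset_iInter fun p => Set.image_mono (hKsub p)
  refine ⟨Set.Subset.antisymm (key.trans himg)
    (Set.iInter_mono fun p => subset_closure), ?_, ?_⟩
  · exact (isClosed_iInter fun p => isClosed_closure).isCompact
  · exact key.trans (Set.image_subset_range Φ K)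
end
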